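/- For every L_L-formula φ(X₁,…,Xₙ) there is an L_WSO-formula ψ(Y₁, Z₁, …, Yₙ, Zₙ) such that for every tuple (A₁,…,Aₙ) of elements of P_fci(𝕀): L(𝕀) ⊨ φ(A₁,…,Aₙ) if and only if WSO(𝕀) ⊨ ψ(l(A₁), r(A₁), …, l(Aₙ), r(Aₙ)). -/

import Mathlib

namespace MCpaper

open FirstOrder Language Structure Set

/-- `𝕀`: a dense linear order with a least element `0` and no greatest element,
concretely the nonnegative rationals. -/
abbrev II : Type := NNRat

/-! ### Set-level operations associated to a linear order -/

section SetOps

variable {α : Type*} [LinearOrder α]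

/-- The singleton of the least element of `A` (as a set; empty if `A` has no least element). -/
def minSet (A : Set α) : Set α := {i ∈ A | ∀ j ∈ A, i ≤ j}

/-- The singleton of the greatest element of `A` (as a set; empty if `A` has no greatest
element). -/
def maxSet (A : Set α) : Set α := {i ∈ A | ∀ j ∈ A, j ≤ i}

/-- `sInvSet A B = {i ∈ A : i has a successor in the suborder A and that successor lies in B}`. -/
def sInvSet (A B : Set α) : Set α :=
  {i ∈ A | ∃ j ∈ A, i < j ∧ (∀ k ∈ A, i < k → j ≤ k) ∧ j ∈ B}

lemma minSet_subset (A : Set α) : minSet A ⊆ A := sep_subset _ _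

lemma minSet_subsingleton (A : Set α) : (minSet A).Subsingleton :=
  fun x hx y hy => le_antisymm (hx.2 y hy.1) (hy.2 x hx.1)

lemma maxSet_subsingleton (A : Set α) : (maxSet A).Subsingleton :=
  fun x hx y hy => le_antisymm (hy.2 x hx.1) (hx.2 y hy.1)
lemma maxSet_subset (A : Set α) : maxSet A ⊆ A := sep_subset _ _
lemma sInvSet_subset (A B : Set α) : sInvSet A B ⊆ A := sep_subset _ _

end SetOps

/-! ### The languages -/

/-- Relation symbols of `L_MO = {⊆, ∃<}`. -/
inductive MORel : ℕ → Type
  | sub : MORel 2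
  | elt : MORel 2

/-- The language `L_MO = {⊆, ∃<}` with two binary relation symbols. -/
def LMO : Language := ⟨fun _ => Empty, MORel⟩

/-- Function symbols of `L_WSO`. -/
inductive WSOFunc : ℕ → Type
  | union : WSOFunc 2
  | inter : WSOFunc 2
  | bot : WSOFunc 0
  | zero : WSOFunc 0
  | min : WSOFunc 1
  | max : WSOFunc 1
  | sinv : WSOFunc 2

/-- The language `L_WSO = {∪, ∩, ⊥, 𝟎, min, max, 𝔰⁻¹}`. -/
def LWSO : Language := ⟨WSOFunc, fun _ => Empty⟩

/-- Function symbols of `L_MSOFin`. -/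
inductive MSOFinFunc : ℕ → Type
  | union : MSOFinFunc 2
  | inter : MSOFinFunc 2
  | bot : MSOFinFunc 0
  | zero : MSOFinFunc 0
  | zeroStar : MSOFinFunc 0
  | sinv : MSOFinFunc 1

/-- The language `L_MSOFin = {∪, ∩, ⊥, 𝟎, 𝟎*, s⁻¹}`. -/
def LMSOFin : Language := ⟨MSOFinFunc, fun _ => Empty⟩

/-- Function symbols of `L_L`. -/
inductive LLFunc : ℕ → Type
  | union : LLFunc 2
  | inter : LLFunc 2
  | bot : LLFunc 0
  | zero : LLFunc 0
  | min : LLFunc 1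
  | max : LLFunc 1
  | left : LLFunc 1
  | right : LLFunc 1

/-- The language `L_L = {∪, ∩, ⊥, 𝟎, min, max, l, r}`. -/
def LL : Language := ⟨LLFunc, fun _ => Empty⟩

/-! ### `WSO(𝕀)` as an `L_WSO`-structure and as an `L_MO`-structure -/

/-- The universe of `WSO(𝕀)`: finite subsets of `𝕀`. -/
abbrev FinSub : Type := {A : Set II // A.Finite}

/-- `WSO(𝕀)` as an `L_WSO`-structure. -/
instance finSubLWSO : LWSO.Structure FinSub where
  funMap {n} f :=
    match f with
    | .union => fun v => ⟨(v 0).1 ∪ (v 1).1, (v 0).2.union (v 1).2⟩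
    | .inter => fun v => ⟨(v 0).1 ∩ (v 1).1, (v 0).2.inter_of_left _⟩
    | .bot => fun _ => ⟨∅, finite_empty⟩
    | .zero => fun _ => ⟨{0}, finite_singleton _⟩
    | .min => fun v => ⟨minSet (v 0).1, (v 0).2.subset (minSet_subset _)⟩
    | .max => fun v => ⟨maxSet (v 0).1, (v 0).2.subset (maxSet_subset _)⟩
    | .sinv => fun v => ⟨sInvSet (v 0).1 (v 1).1, (v 0).2.subset (sInvSet_subset _ _)⟩
  RelMap {n} r := Empty.elim r

/-- `WSO(α)` as an `L_MO`-structure, for any linearly ordered `α` (here specialised to `𝕀`). -/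
instance finSubLMO : LMO.Structure FinSub where
  funMap {n} f := Empty.elim f
  RelMap {n} r :=
    match r with
    | .sub => fun v => (v 0).1 ⊆ (v 1).1
    | .elt => fun v => ∃ a ∈ (v 0).1, ∃ b ∈ (v 1).1, a < b

/-- `MSO(α)`: the `L_MO`-structure on the full powerset of a linear order `α`. -/
instance powersetLMO (α : Type*) [LinearOrder α] : LMO.Structure (Set α) where
  funMap {n} f := Empty.elim f
  RelMap {n} r :=
    match r with
    | .sub => fun v => v 0 ⊆ v 1
    | .elt => fun v => ∃ a ∈ v 0, ∃ b ∈ v 1, a < b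

/-! ### `MSO(n)` and the pseudofinite theory `T_MSOFin` -/

/-- `MSO(n)` as an `L_MSOFin`-structure on the powerset of `{0, …, n-1}`. -/
instance msoFinStructure (n : ℕ) : LMSOFin.Structure (Set (Fin n)) where
  funMap {m} f :=
    match f with
    | .union => fun v => v 0 ∪ v 1
    | .inter => fun v => v 0 ∩ v 1
    | .bot => fun _ => ∅
    | .zero => fun _ => {i : Fin n | (i : ℕ) = 0}
    | .zeroStar => fun _ => {i : Fin n | (i : ℕ) = n - 1}
    | .sinv => fun v => {i : Fin n | ∃ j : Fin n, (j : ℕ) = (i : ℕ) + 1 ∧ j ∈ v 0}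
  RelMap {m} r := Empty.elim r

/-- The pseudofinite monadic second order theory of linear order: the set of `L_MSOFin`-sentences
true in `MSO(n)` for every `n`. -/
def TMSOFin : LMSOFin.Theory := {φ : LMSOFin.Sentence | ∀ n : ℕ, Set (Fin n) ⊨ φ}

/-! ### Abstract `L_MO`-structures: atoms and interval restrictions -/

section LMOAbstract

variable {M : Type*} [LMO.Structure M]

/-- The interpretation of `⊆` in an `L_MO`-structure. -/
def mSub (a b : M) : Prop := RelMap (L := LMO) MORel.sub ![a, b]

/-- The interpretation of `∃<` in an `L_MO`-structure. -/
def mLt (a b : M) : Prop := RelMap (L := LMO) MORel.elt ![a, b]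

/-- `b` is the least element of the partial order `(M, ⊆)`. -/
def IsBotM (b : M) : Prop := ∀ x : M, mSub b x

/-- `a` is an atom of `(M, ⊆)`: a minimal element strictly above the least element. -/
def IsAtomM (a : M) : Prop :=
  ∃ b : M, IsBotM b ∧ a ≠ b ∧ ∀ x : M, mSub x a → x = a ∨ x = b

/-- The carrier `{B : M ∣ every atom X ⊆ B satisfies (i ∃< X ∨ X = i) ∧ X ∃< j}`
of the restriction `M ↾ [i,j)`. -/
def intervalRes (i j : M) : Set M :=
  {B : M | ∀ X : M, IsAtomM X → mSub X B → (mLt i X ∨ X = i) ∧ mLt X j}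

/-- The `L_MO`-structure induced on a subset of an `L_MO`-structure. -/
def inducedLMO (s : Set M) : LMO.Structure s where
  funMap {n} f := Empty.elim f
  RelMap {n} r v := RelMap (M := M) r fun k => (v k : M)

end LMOAbstract

/-! ### Abstract `L_WSO`-structures, restrictions to elements -/

section LWSOAbstract

variable {M : Type*} [LWSO.Structure M]

/-- The interpretation of `∪` in an `L_WSO`-structure. -/
def wUnion (a b : M) : M := funMap (L := LWSO) WSOFunc.union ![a, b]

/-- The interpretation of `∩` in an `L_WSO`-structure. -/
def wInter (a b : M) : M := funMap (L := LWSO) WSOFunc.inter ![a, b]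

/-- The interpretation of `⊥` in an `L_WSO`-structure. -/
def wBot : M := funMap (L := LWSO) (M := M) WSOFunc.bot ![]

/-- The interpretation of `𝟎` in an `L_WSO`-structure. -/
def wZero : M := funMap (L := LWSO) (M := M) WSOFunc.zero ![]

/-- The interpretation of `min` in an `L_WSO`-structure. -/
def wMin (a : M) : M := funMap (L := LWSO) WSOFunc.min ![a]

/-- The interpretation of `max` in an `L_WSO`-structure. -/
def wMax (a : M) : M := funMap (L := LWSO) WSOFunc.max ![a]

/-- The interpretation of `𝔰⁻¹` in an `L_WSO`-structure. -/
def wSInv (a b : M) : M := funMap (L := LWSO) WSOFunc.sinv ![a, b]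

variable (M)

/-- The universe `{B : M ∣ B ∩ A = B}` of the restriction `M ↾ A`. -/
def Res (A : M) : Type _ := {B : M // wInter B A = B}

/-- The (true in every model of `Th(WSO(𝕀))`) closure conditions saying that
`{B : M ∣ B ∩ A = B}` is closed under the operations of the restricted structure `M ↾ A`. -/
structure ResClosed (A : M) : Prop where
  union : ∀ B C : M, wInter B A = B → wInter C A = C → wInter (wUnion B C) A = wUnion B C
  inter : ∀ B C : M, wInter B A = B → wInter C A = C → wInter (wInter B C) A = wInter B C
  bot : wInter (wBot : M) A = wBot
  zero : wInter (wMin A) A = wMin A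
  zeroStar : wInter (wMax A) A = wMax A
  sinv : ∀ B : M, wInter B A = B → wInter (wSInv A B) A = wSInv A B

variable {M}

/-- The restriction `M ↾ A` as an `L_MSOFin`-structure: `∪`, `∩`, `⊥` are inherited from `M`,
`𝟎` is `min(A)`, `𝟎*` is `max(A)`, and `s⁻¹` is `B ↦ 𝔰⁻¹(A, B)` computed in `M`. -/
def resStructure {A : M} (hc : ResClosed M A) : LMSOFin.Structure (Res M A) where
  funMap {m} f :=
    match f with
    | .union => fun v => ⟨wUnion (v 0).1 (v 1).1, hc.union _ _ (v 0).2 (v 1).2⟩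
    | .inter => fun v => ⟨wInter (v 0).1 (v 1).1, hc.inter _ _ (v 0).2 (v 1).2⟩
    | .bot => fun _ => ⟨wBot, hc.bot⟩
    | .zero => fun _ => ⟨wMin A, hc.zero⟩
    | .zeroStar => fun _ => ⟨wMax A, hc.zeroStar⟩
    | .sinv => fun v => ⟨wSInv A (v 0).1, hc.sinv _ (v 0).2⟩
  RelMap {m} r := Empty.elim r

/-- `⌊Ā⌋ = 𝟎 ∪ A₁ ∪ … ∪ Aₙ`, computed in `M`. -/
def wFloor {n : ℕ} (A : Fin n → M) : M := (List.ofFn A).foldl wUnion wZero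

end LWSOAbstract

/-! ### Complexity classes of formulas -/

section Complexity

variable {L : Language} {α : Type*}

/-- Positive existential formulas: those built from atomic formulas using only `∧`, `∨`
and `∃`. -/
inductive IsPosEx : {n : ℕ} → L.BoundedFormula α n → Prop
  | equal {n} (t₁ t₂ : L.Term (α ⊕ Fin n)) : IsPosEx (BoundedFormula.equal t₁ t₂)
  | rel {n k} (R : L.Relations k) (ts : Fin k → L.Term (α ⊕ Fin n)) :
      IsPosEx (BoundedFormula.rel R ts)
  | inf {n} {φ ψ : L.BoundedFormula α n} : IsPosEx φ → IsPosEx ψ → IsPosEx (φ ⊓ ψ)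
  | sup {n} {φ ψ : L.BoundedFormula α n} : IsPosEx φ → IsPosEx ψ → IsPosEx (φ ⊔ ψ)
  | ex {n} {φ : L.BoundedFormula α (n + 1)} : IsPosEx φ → IsPosEx φ.ex

/-- Existential formulas: a block of existential quantifiers applied to a
quantifier-free formula. -/
inductive IsExist : {n : ℕ} → L.BoundedFormula α n → Prop
  | of_isQF {n} {φ : L.BoundedFormula α n} : φ.IsQF → IsExist φ
  | ex {n} {φ : L.BoundedFormula α (n + 1)} : IsExist φ → IsExist φ.ex

end Complexity

/-! ### Finite unions of closed intervals and the structure `L(𝕀)` -/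

/-- `A` is a finite union of closed intervals of `𝕀` (each of the form `[i,j]` or `[i,∞)`;
intervals of the form `(-∞, j]` coincide with `[0, j]` since `𝕀` has least element `0`). -/
def IsFCI (A : Set II) : Prop :=
  ∃ (k : ℕ) (f : Fin k → Set II),
    (∀ m : Fin k, (∃ i j : II, f m = Set.Icc i j) ∨ ∃ i : II, f m = Set.Ici i) ∧ A = ⋃ m, f m

/-- The universe of `L(𝕀)`: finite unions of closed intervals of `𝕀`. -/
abbrev FCI : Type := {A : Set II // IsFCI A}

/-- The set of left endpoints of `A`. -/
def lSet (A : Set II) : Set II := {i ∈ A | i = 0 ∨ ∃ i' < i, Set.Ioo i' i ∩ A = ∅}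

/-- The set of right endpoints of `A`. -/
def rSet (A : Set II) : Set II := {i ∈ A | ∃ i'', i < i'' ∧ Set.Ioo i i'' ∩ A = ∅}

lemma isFCI_empty : IsFCI (∅ : Set II) := ⟨0, Fin.elim0, fun m => m.elim0, by simp⟩

lemma isFCI_singleton (i : II) : IsFCI {i} :=
  ⟨1, fun _ => Set.Icc i i, fun _ => Or.inl ⟨i, i, rfl⟩, by simp⟩

lemma IsFCI.union {A B : Set II} (hA : IsFCI A) (hB : IsFCI B) : IsFCI (A ∪ B) := by
  obtain ⟨k, f, hf, rfl⟩ := hA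
  obtain ⟨l, g, hg, rfl⟩ := hB
  refine ⟨k + l, fun m => Sum.elim f g (finSumFinEquiv.symm m), fun m => ?_, ?_⟩
  · dsimp only
    rcases finSumFinEquiv.symm m with i | j
    · exact hf i
    · exact hg j
  · ext x
    simp only [Set.mem_union, Set.mem_iUnion]
    constructor
    · rintro (⟨i, hi⟩ | ⟨j, hj⟩)
      · exact ⟨finSumFinEquiv (Sum.inl i), by simpa using hi⟩
      · exact ⟨finSumFinEquiv (Sum.inr j), by simpa using hj⟩
    · rintro ⟨m, hm⟩
      rcases h : finSumFinEquiv.symm m with i | j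
      · rw [h] at hm; exact Or.inl ⟨i, hm⟩
      · rw [h] at hm; exact Or.inr ⟨j, hm⟩

lemma Icc_inter_Ici' {a b c : II} : Set.Icc a b ∩ Set.Ici c = Set.Icc (a ⊔ c) b := by
  ext x
  simp only [Set.mem_inter_iff, Set.mem_Icc, Set.mem_Ici, sup_le_iff]
  tauto

lemma IsFCI.inter {A B : Set II} (hA : IsFCI A) (hB : IsFCI B) : IsFCI (A ∩ B) := by
  obtain ⟨k, f, hf, rfl⟩ := hA
  obtain ⟨l, g, hg, rfl⟩ := hB
  refine ⟨k * l, fun m => f (finProdFinEquiv.symm m).1 ∩ g (finProdFinEquiv.symm m).2,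
    fun m => ?_, ?_⟩
  · dsimp only
    rcases hf (finProdFinEquiv.symm m).1 with ⟨a, b, hab⟩ | ⟨a, ha⟩ <;>
      rcases hg (finProdFinEquiv.symm m).2 with ⟨c, d, hcd⟩ | ⟨c, hc⟩
    · exact Or.inl ⟨a ⊔ c, b ⊓ d, by rw [hab, hcd, Set.Icc_inter_Icc]⟩
    · exact Or.inl ⟨a ⊔ c, b, by rw [hab, hc, Icc_inter_Ici']⟩
    · exact Or.inl ⟨c ⊔ a, d, by rw [ha, hcd, Set.inter_comm, Icc_inter_Ici']⟩
    · exact Or.inr ⟨a ⊔ c, by rw [ha, hc, Set.Ici_inter_Ici]⟩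
  · ext x
    simp only [Set.mem_inter_iff, Set.mem_iUnion]
    constructor
    · rintro ⟨⟨i, hi⟩, ⟨j, hj⟩⟩
      exact ⟨finProdFinEquiv (i, j), by simpa using ⟨hi, hj⟩⟩
    · rintro ⟨m, hm⟩
      exact ⟨⟨_, hm.1⟩, ⟨_, hm.2⟩⟩

lemma isFCI_minSet (A : Set II) : IsFCI (minSet A) := by
  rcases (minSet_subsingleton A).eq_empty_or_singleton with h | ⟨i, h⟩
  · rw [h]; exact isFCI_empty
  · rw [h]; exact isFCI_singleton i

lemma isFCI_maxSet (A : Set II) : IsFCI (maxSet A) := by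
  rcases (maxSet_subsingleton A).eq_empty_or_singleton with h | ⟨i, h⟩
  · rw [h]; exact isFCI_empty
  · rw [h]; exact isFCI_singleton i

lemma finite_isFCI {A : Set II} (hA : A.Finite) : IsFCI A :=
  Set.Finite.induction_on _ hA isFCI_empty
    (fun _ _ ih => by rw [Set.insert_eq]; exact (isFCI_singleton _).union ih)

lemma IsFCI.lSet_finite {A : Set II} (hA : IsFCI A) : (lSet A).Finite := by
  obtain ⟨k, f, hf, rfl⟩ := hA
  have hsub : lSet (⋃ m, f m) ⊆ {0} ∪ ⋃ m, minSet (f m) := by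
    rintro i ⟨hiA, hi⟩
    rcases hi with rfl | ⟨i', hi'lt, hgap⟩
    · exact Set.mem_union_left _ rfl
    · obtain ⟨m, him⟩ := Set.mem_iUnion.1 hiA
      refine Set.mem_union_right _ (Set.mem_iUnion.2 ⟨m, him, fun j hj => ?_⟩)
      by_contra hji
      push_neg at hji
      obtain ⟨x, hx1, hx2⟩ := exists_between (max_lt hi'lt hji : max i' j < i)
      have hxfm : x ∈ f m := by
        rcases hf m with ⟨a, b, hab⟩ | ⟨a, ha⟩
        · rw [hab] at him hj ⊢
          exact ⟨hj.1.trans ((le_max_right i' j).trans hx1.le), hx2.le.trans him.2⟩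
        · rw [ha] at hj ⊢
          exact hj.trans ((le_max_right i' j).trans hx1.le)
      have hmem : x ∈ Set.Ioo i' i ∩ ⋃ m, f m :=
        ⟨⟨(le_max_left i' j).trans_lt hx1, hx2⟩, Set.mem_iUnion.2 ⟨m, hxfm⟩⟩
      rw [hgap] at hmem
      exact hmem
  exact ((Set.finite_singleton 0).union
    (Set.finite_iUnion fun m => (minSet_subsingleton (f m)).finite)).subset hsub

lemma IsFCI.rSet_finite {A : Set II} (hA : IsFCI A) : (rSet A).Finite := by
  obtain ⟨k, f, hf, rfl⟩ := hA
  have hsub : rSet (⋃ m, f m) ⊆ ⋃ m, maxSet (f m) := by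
    rintro i ⟨hiA, i'', hi''gt, hgap⟩
    obtain ⟨m, him⟩ := Set.mem_iUnion.1 hiA
    refine Set.mem_iUnion.2 ⟨m, him, fun j hj => ?_⟩
    by_contra hij
    push_neg at hij
    obtain ⟨x, hx1, hx2⟩ := exists_between (lt_min hi''gt hij : i < min i'' j)
    have hxfm : x ∈ f m := by
      rcases hf m with ⟨a, b, hab⟩ | ⟨a, ha⟩
      · rw [hab] at him hj ⊢
        exact ⟨him.1.trans hx1.le, (hx2.le.trans (min_le_right i'' j)).trans hj.2⟩
      · rw [ha] at him ⊢
        exact him.trans hx1.le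
    have hmem : x ∈ Set.Ioo i i'' ∩ ⋃ m, f m :=
      ⟨⟨hx1, hx2.trans_le (min_le_left i'' j)⟩, Set.mem_iUnion.2 ⟨m, hxfm⟩⟩
    rw [hgap] at hmem
    exact hmem
  exact (Set.finite_iUnion fun m => (maxSet_subsingleton (f m)).finite).subset hsub

/-- `L(𝕀)` as an `L_L`-structure. -/
instance fciLL : LL.Structure FCI where
  funMap {m} f :=
    match f with
    | .union => fun v => ⟨(v 0).1 ∪ (v 1).1, (v 0).2.union (v 1).2⟩
    | .inter => fun v => ⟨(v 0).1 ∩ (v 1).1, (v 0).2.inter (v 1).2⟩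
    | .bot => fun _ => ⟨∅, isFCI_empty⟩
    | .zero => fun _ => ⟨{0}, isFCI_singleton 0⟩
    | .min => fun v => ⟨minSet (v 0).1, isFCI_minSet _⟩
    | .max => fun v => ⟨maxSet (v 0).1, isFCI_maxSet _⟩
    | .left => fun v => ⟨lSet (v 0).1, finite_isFCI (v 0).2.lSet_finite⟩
    | .right => fun v => ⟨rSet (v 0).1, finite_isFCI (v 0).2.rSet_finite⟩
  RelMap {m} r := Empty.elim r


/-! ### Semantic lemmas: membership from endpoints -/

/-- Membership predicate computed from a set `Y` of left endpoints and a set `Z` of right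
endpoints. -/
def Mb (Y Z : Set II) (p : II) : Prop := ∃ y ∈ Y, y ≤ p ∧ ∀ z ∈ Z, z < y ∨ p ≤ z

lemma exists_greatest_iUnion {k : ℕ} {g : Fin k → Set II}
    (h : ∀ m, (g m).Nonempty → ∃ z, IsGreatest (g m) z) (hne : (⋃ m, g m).Nonempty) :
    ∃ z, IsGreatest (⋃ m, g m) z := by
  classical
  obtain ⟨x0, hx0⟩ := hne
  obtain ⟨m0, hm0⟩ := Set.mem_iUnion.1 hx0
  set s : Finset (Fin k) := Finset.univ.filter (fun m => (g m).Nonempty) with hs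
  have hmem : ∀ m : Fin k, m ∈ s ↔ (g m).Nonempty := by
    intro m; simp [hs]
  have hms : m0 ∈ s := (hmem m0).2 ⟨x0, hm0⟩
  have h' : ∀ m : Fin k, ∃ z : II, m ∈ s → IsGreatest (g m) z := by
    intro m
    by_cases hm : m ∈ s
    · obtain ⟨z, hz⟩ := h m ((hmem m).1 hm)
      exact ⟨z, fun _ => hz⟩
    · exact ⟨0, fun c => absurd c hm⟩
  choose Z hZ using h'
  obtain ⟨mx, hmx, hmax⟩ := s.exists_max_image Z ⟨m0, hms⟩
  refine ⟨Z mx, Set.mem_iUnion.2 ⟨mx, (hZ mx hmx).1⟩, fun x hx => ?_⟩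
  obtain ⟨m, hm⟩ := Set.mem_iUnion.1 hx
  have hms' : m ∈ s := (hmem m).2 ⟨x, hm⟩
  exact ((hZ m hms').2 hm).trans (hmax m hms')

/-- Uniform closed intervals `[a, b]` with `b` possibly `⊤`. -/
def Itv (a : II) (b : WithTop II) : Set II := {x | a ≤ x ∧ (x : WithTop II) ≤ b}

lemma isFCI_itv {A : Set II} (hA : IsFCI A) :
    ∃ (k : ℕ) (a : Fin k → II) (b : Fin k → WithTop II), A = ⋃ m, Itv (a m) (b m) := by
  obtain ⟨k, f, hf, rfl⟩ := hA
  have h' : ∀ m, ∃ (a : II) (b : WithTop II), f m = Itv a b := by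
    intro m
    rcases hf m with ⟨i, j, hij⟩ | ⟨i, hi⟩
    · exact ⟨i, (j : WithTop II), by
        rw [hij]; ext x; simp [Itv, Set.mem_Icc, WithTop.coe_le_coe]⟩
    · exact ⟨i, ⊤, by rw [hi]; ext x; simp [Itv, Set.mem_Ici, le_top]⟩
  choose a b hab using h'
  exact ⟨k, a, b, by simp_rw [hab]⟩

lemma mem_iff_Mb {A : Set II} (hA : IsFCI A) (p : II) :
    p ∈ A ↔ Mb (lSet A) (rSet A) p := by
  obtain ⟨k, a, b, hrep⟩ := isFCI_itv hA
  constructor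
  · intro hp
    have hTfin : (insert p ({x | ∃ m, x = a m} ∩ {x | x ≤ p ∧ Set.Icc x p ⊆ A})).Finite := by
      apply Set.Finite.insert
      apply Set.Finite.inter_of_left
      exact (Set.finite_range a).subset (by rintro x ⟨m, hm⟩; exact ⟨m, hm.symm⟩)
    obtain ⟨y, hyT, hymin⟩ := Set.exists_min_image _ id hTfin ⟨p, Set.mem_insert _ _⟩
    have hyP : y ≤ p ∧ Set.Icc y p ⊆ A := by
      rcases Set.mem_insert_iff.1 hyT with rfl | ⟨_, h⟩
      · exact ⟨le_refl _, fun q hq => by rwa [le_antisymm hq.2 hq.1]⟩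
      · exact h
    have hyA : y ∈ A := hyP.2 ⟨le_refl y, hyP.1⟩
    have hylSet : y ∈ lSet A := by
      refine ⟨hyA, ?_⟩
      by_cases hy0 : y = 0
      · exact Or.inl hy0
      right
      have hy0' : (0 : II) < y := (zero_le : (0 : II) ≤ y).lt_of_ne (Ne.symm hy0)
      have hFfin : (insert (0 : II) {x : II | ∃ m, (x : WithTop II) = b m ∧ x < y}).Finite := by
        apply Set.Finite.insert
        have hsub : {x : II | ∃ m, (x : WithTop II) = b m ∧ x < y} ⊆
            ⋃ m, {x : II | (x : WithTop II) = b m} := by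
          rintro x ⟨m, hm, _⟩; exact Set.mem_iUnion.2 ⟨m, hm⟩
        refine Set.Finite.subset ?_ hsub
        apply Set.finite_iUnion
        intro m
        apply Set.Subsingleton.finite
        intro u hu w hw
        exact WithTop.coe_injective (hu.trans hw.symm)
      obtain ⟨i', hi'F, hi'max⟩ := Set.exists_max_image _ id hFfin ⟨0, Set.mem_insert _ _⟩
      have hi'lt : i' < y := by
        rcases Set.mem_insert_iff.1 hi'F with rfl | ⟨m, _, hlt⟩
        · exact hy0'
        · exact hlt
      refine ⟨i', hi'lt, ?_⟩
      rw [Set.eq_empty_iff_forall_notMem]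
      rintro x ⟨⟨hx1, hx2⟩, hxA⟩
      have hxA' := hxA
      rw [hrep] at hxA'
      obtain ⟨m, hxm⟩ := Set.mem_iUnion.1 hxA'
      rcases le_or_gt (y : WithTop II) (b m) with hby | hby
      · have ham : a m ∈ insert p ({x | ∃ m, x = a m} ∩ {x | x ≤ p ∧ Set.Icc x p ⊆ A}) := by
          refine Set.mem_insert_of_mem _ ⟨⟨m, rfl⟩, le_trans (hxm.1.trans hx2.le) hyP.1, ?_⟩
          intro q hq
          rcases le_or_gt y q with h1 | h1
          · exact hyP.2 ⟨h1, hq.2⟩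
          · rw [hrep]
            exact Set.mem_iUnion.2 ⟨m, hq.1, le_trans (WithTop.coe_le_coe.2 h1.le) hby⟩
        have hle := hymin _ ham
        simp only [id] at hle
        exact absurd hle (not_le.2 (hxm.1.trans_lt hx2))
      · obtain ⟨c, hc1, hc2⟩ := WithTop.lt_iff_exists_coe.1 hby
        have hcy : c < y := WithTop.coe_lt_coe.1 hc2
        have hcF : c ∈ insert (0 : II) {x : II | ∃ m, (x : WithTop II) = b m ∧ x < y} :=
          Set.mem_insert_of_mem _ ⟨m, hc1.symm, hcy⟩
        have hxc : x ≤ c := WithTop.coe_le_coe.1 (by rw [← hc1]; exact hxm.2)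
        have hci' := hi'max _ hcF
        simp only [id] at hci'
        exact absurd (hxc.trans hci') (not_le.2 hx1)
    refine ⟨y, hylSet, hyP.1, ?_⟩
    intro z hz
    rcases lt_or_ge z y with h | h
    · exact Or.inl h
    rcases le_or_gt p z with h2 | h2
    · exact Or.inr h2
    exfalso
    obtain ⟨hzA, i'', hi''gt, hgap⟩ := hz
    obtain ⟨q, hq1, hq2⟩ := exists_between (lt_min hi''gt h2)
    have hqA : q ∈ A := hyP.2 ⟨le_trans h hq1.le, (hq2.trans_le (min_le_right _ _)).le⟩
    have hmem : q ∈ Set.Ioo z i'' ∩ A := ⟨⟨hq1, hq2.trans_le (min_le_left _ _)⟩, hqA⟩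
    rw [hgap] at hmem
    exact hmem
  · rintro ⟨y, hylSet, hyp, hz⟩
    rcases eq_or_lt_of_le hyp with rfl | hyp'
    · exact hylSet.1
    by_contra hpA
    have hne : (⋃ m, Itv (a m) (b m) ∩ Set.Icc y p).Nonempty := by
      refine ⟨y, ?_⟩
      have hyA : y ∈ A := hylSet.1
      rw [hrep] at hyA
      obtain ⟨m, hm⟩ := Set.mem_iUnion.1 hyA
      exact Set.mem_iUnion.2 ⟨m, hm, le_refl y, hyp⟩
    have hg : ∀ m, (Itv (a m) (b m) ∩ Set.Icc y p).Nonempty →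
        ∃ z, IsGreatest (Itv (a m) (b m) ∩ Set.Icc y p) z := by
      rintro m ⟨x, hx⟩
      rcases eq_or_ne (b m) ⊤ with hbm | hbm
      · refine ⟨p, ⟨⟨hx.1.1.trans hx.2.2, by rw [hbm]; exact le_top⟩, hyp, le_refl p⟩, ?_⟩
        intro w hw; exact hw.2.2
      · obtain ⟨c, hc⟩ := WithTop.ne_top_iff_exists.1 hbm
        rcases le_or_gt p c with hpc | hcp
        · refine ⟨p, ⟨⟨hx.1.1.trans hx.2.2, by rw [← hc]; exact WithTop.coe_le_coe.2 hpc⟩,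
            hyp, le_refl p⟩, fun w hw => hw.2.2⟩
        · have hxc : x ≤ c := WithTop.coe_le_coe.1 (by rw [hc]; exact hx.1.2)
          refine ⟨c, ⟨⟨hx.1.1.trans hxc, by rw [← hc]⟩, hx.2.1.trans hxc, hcp.le⟩, ?_⟩
          intro w hw
          exact WithTop.coe_le_coe.1 (by rw [hc]; exact hw.1.2)
    obtain ⟨z, hzmem, hzub⟩ := exists_greatest_iUnion hg hne
    have hSz : z ∈ A ∩ Set.Icc y p := by
      rw [hrep, Set.iUnion_inter]; exact hzmem
    have hzA : z ∈ A := hSz.1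
    have hzy : y ≤ z := hSz.2.1
    have hzp : z < p := lt_of_le_of_ne hSz.2.2 (fun h => hpA (h ▸ hzA))
    have hzr : z ∈ rSet A := by
      refine ⟨hzA, p, hzp, ?_⟩
      rw [Set.eq_empty_iff_forall_notMem]
      rintro x ⟨⟨hx1, hx2⟩, hxA⟩
      have hxS : x ∈ A ∩ Set.Icc y p := ⟨hxA, hzy.trans hx1.le, hx2.le⟩
      rw [hrep, Set.iUnion_inter] at hxS
      exact absurd (hzub hxS) (not_le.2 hx1)
    rcases hz z hzr with h | h
    · exact absurd hzy (not_le.2 h)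
    · exact absurd hzp (not_lt.2 h)

lemma setOf_Mb_singleton (a : II) {Z : Set II} (hZ : Z.Finite) :
    IsFCI {p | Mb {a} Z p} := by
  by_cases h : (Z ∩ Set.Ici a).Nonempty
  · obtain ⟨za, ⟨hzaZ, hzaa⟩, hzamin⟩ := Set.exists_min_image _ id (hZ.inter_of_left _) h
    have heq : {p | Mb {a} Z p} = Set.Icc a za := by
      ext p
      simp only [Mb, Set.mem_singleton_iff, exists_eq_left, Set.mem_setOf_eq, Set.mem_Icc]
      constructor
      · rintro ⟨hap, hall⟩
        refine ⟨hap, ?_⟩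
        rcases hall za hzaZ with h1 | h1
        · exact absurd hzaa (not_le.2 h1)
        · exact h1
      · rintro ⟨hap, hpz⟩
        refine ⟨hap, fun z hzZ => ?_⟩
        rcases lt_or_ge z a with h1 | h1
        · exact Or.inl h1
        · exact Or.inr (hpz.trans (hzamin z ⟨hzZ, h1⟩))
    rw [heq]
    exact ⟨1, fun _ => Set.Icc a za, fun _ => Or.inl ⟨a, za, rfl⟩, by rw [Set.iUnion_const]⟩
  · have heq : {p | Mb {a} Z p} = Set.Ici a := by
      ext p
      simp only [Mb, Set.mem_singleton_iff, exists_eq_left, Set.mem_setOf_eq, Set.mem_Ici]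
      constructor
      · exact fun h' => h'.1
      · intro hap
        refine ⟨hap, fun z hzZ => ?_⟩
        rcases lt_or_ge z a with h1 | h1
        · exact Or.inl h1
        · exact absurd (⟨z, hzZ, h1⟩ : (Z ∩ Set.Ici a).Nonempty) h
    rw [heq]
    exact ⟨1, fun _ => Set.Ici a, fun _ => Or.inr ⟨a, rfl⟩, by rw [Set.iUnion_const]⟩

lemma isFCI_Mb {Y Z : Set II} (hY : Y.Finite) (hZ : Z.Finite) : IsFCI {p | Mb Y Z p} := by
  refine Set.Finite.induction_on _ hY ?_ ?_
  · have heq : {p | Mb ∅ Z p} = ∅ := by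
      ext p; simp [Mb]
    rw [heq]; exact isFCI_empty
  · intro c s _ _ ih
    have heq : {p | Mb (insert c s) Z p} = {p | Mb {c} Z p} ∪ {p | Mb s Z p} := by
      ext p
      simp only [Mb, Set.mem_insert_iff, Set.mem_singleton_iff, exists_eq_left,
        Set.mem_setOf_eq, Set.mem_union]
      constructor
      · rintro ⟨y, (rfl | hy), h2⟩
        · exact Or.inl h2
        · exact Or.inr ⟨y, hy, h2⟩
      · rintro (h2 | ⟨y, hy, h2⟩)
        · exact ⟨c, Or.inl rfl, h2⟩
        · exact ⟨y, Or.inr hy, h2⟩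
    rw [heq]
    exact (setOf_Mb_singleton c hZ).union ih

lemma lSet_eq_self {S : Set II} (hS : S.Finite) : lSet S = S := by
  refine Set.Subset.antisymm (fun i hi => hi.1) (fun i hi => ⟨hi, ?_⟩)
  by_cases h0 : i = 0
  · exact Or.inl h0
  right
  by_cases h : (S ∩ Set.Iio i).Nonempty
  · obtain ⟨i', ⟨hi'S, hi'lt⟩, hmax⟩ := Set.exists_max_image _ id (hS.inter_of_left _) h
    refine ⟨i', hi'lt, ?_⟩
    rw [Set.eq_empty_iff_forall_notMem]
    rintro x ⟨⟨hx1, hx2⟩, hxS⟩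
    exact absurd (hmax x ⟨hxS, hx2⟩) (not_le.2 hx1)
  · refine ⟨0, (zero_le : (0 : II) ≤ i).lt_of_ne (Ne.symm h0), ?_⟩
    rw [Set.eq_empty_iff_forall_notMem]
    rintro x ⟨⟨_, hx2⟩, hxS⟩
    exact h ⟨x, hxS, hx2⟩

lemma rSet_eq_self {S : Set II} (hS : S.Finite) : rSet S = S := by
  refine Set.Subset.antisymm (fun i hi => hi.1) (fun i hi => ⟨hi, ?_⟩)
  by_cases h : (S ∩ Set.Ioi i).Nonempty
  · obtain ⟨i'', ⟨hS', hgt⟩, hmin⟩ := Set.exists_min_image _ id (hS.inter_of_left _) h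
    refine ⟨i'', hgt, ?_⟩
    rw [Set.eq_empty_iff_forall_notMem]
    rintro x ⟨⟨hx1, hx2⟩, hxS⟩
    exact absurd (hmin x ⟨hxS, hx1⟩) (not_le.2 hx2)
  · obtain ⟨i'', hgt⟩ := exists_gt i
    refine ⟨i'', hgt, ?_⟩
    rw [Set.eq_empty_iff_forall_notMem]
    rintro x ⟨⟨hx1, _⟩, hxS⟩
    exact h ⟨x, hxS, hx1⟩

lemma fci_val_eq_Mb (A : FCI) : A.1 = {p | Mb (lSet A.1) (rSet A.1) p} :=
  Set.ext fun p => mem_iff_Mb A.2 p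

lemma fci_ext {A B : FCI} (hl : lSet A.1 = lSet B.1) (hr : rSet A.1 = rSet B.1) : A = B := by
  refine Subtype.ext ?_
  rw [fci_val_eq_Mb A, fci_val_eq_Mb B, hl, hr]


/-! ### `L_WSO` formula builders -/

/-- The singleton `{i}` as an element of `FinSub`. -/
def sing (i : II) : FinSub := ⟨{i}, Set.finite_singleton i⟩

@[simp] lemma sing_val (i : II) : (sing i).1 = {i} := rfl

lemma sing_injective : Function.Injective sing := fun i j h =>
  Set.singleton_eq_singleton_iff.1 (congrArg Subtype.val h)

@[simp] lemma wU_val (a b : FinSub) : (wUnion a b).1 = a.1 ∪ b.1 := rfl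
@[simp] lemma wI_val (a b : FinSub) : (wInter a b).1 = a.1 ∩ b.1 := rfl
@[simp] lemma wMin_val (a : FinSub) : (wMin a).1 = minSet a.1 := rfl
@[simp] lemma wBot_val : (wBot : FinSub).1 = ∅ := rfl
@[simp] lemma wZero_val : (wZero : FinSub).1 = {0} := rfl

lemma minSet_singleton (i : II) : minSet {i} = {i} := by
  ext x
  refine ⟨fun h => h.1, ?_⟩
  rintro rfl
  exact ⟨Set.mem_singleton _, fun j hj => le_of_eq hj.symm⟩

lemma minSet_eq_self_iff {B : Set II} : minSet B = B ∧ B ≠ ∅ ↔ ∃ i, B = {i} := by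
  constructor
  · rintro ⟨hmin, hne⟩
    obtain ⟨i, hi⟩ := Set.nonempty_iff_ne_empty.2 hne
    refine ⟨i, Set.Subset.antisymm (fun j hj => ?_) (Set.singleton_subset_iff.2 hi)⟩
    have hj' : j ∈ minSet B := hmin.symm ▸ hj
    have hi' : i ∈ minSet B := hmin.symm ▸ hi
    exact le_antisymm (hj'.2 i hi'.1) (hi'.2 j hj'.1)
  · rintro ⟨i, rfl⟩
    exact ⟨minSet_singleton i, Set.singleton_ne_empty i⟩

lemma minSet_pair_iff {i j : II} : minSet ({i} ∪ {j}) = {i} ↔ i ≤ j := by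
  constructor
  · intro h
    have hi : i ∈ minSet ({i} ∪ {j}) := h.symm ▸ rfl
    exact hi.2 j (Or.inr rfl)
  · intro hij
    ext x
    simp only [minSet, Set.mem_union, Set.mem_singleton_iff, Set.mem_setOf_eq, Set.mem_sep_iff]
    constructor
    · rintro ⟨(rfl | rfl), h2⟩
      · rfl
      · exact le_antisymm (h2 i (Or.inl rfl)) hij
    · rintro rfl
      exact ⟨Or.inl rfl, fun k hk => by rcases hk with rfl | rfl; exacts [le_refl _, hij]⟩

section FormulaBuilders

open FirstOrder.Language

variable {γ : Type}

/-- union, as a term builder. -/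
def tU (t₁ t₂ : LWSO.Term γ) : LWSO.Term γ := Functions.apply₂ WSOFunc.union t₁ t₂
/-- intersection, as a term builder. -/
def tI (t₁ t₂ : LWSO.Term γ) : LWSO.Term γ := Functions.apply₂ WSOFunc.inter t₁ t₂
/-- min, as a term builder. -/
def tMin (t : LWSO.Term γ) : LWSO.Term γ := Functions.apply₁ WSOFunc.min t
/-- the empty set, as a term. -/
def tBot : LWSO.Term γ := Constants.term (WSOFunc.bot : LWSO.Constants)
/-- the set `{0}`, as a term. -/
def tZero : LWSO.Term γ := Constants.term (WSOFunc.zero : LWSO.Constants)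

@[simp] lemma realize_tU {v : γ → FinSub} {t₁ t₂ : LWSO.Term γ} :
    (tU t₁ t₂).realize v = wUnion (t₁.realize v) (t₂.realize v) := by
  rfl

@[simp] lemma realize_tI {v : γ → FinSub} {t₁ t₂ : LWSO.Term γ} :
    (tI t₁ t₂).realize v = wInter (t₁.realize v) (t₂.realize v) := by
  rfl

@[simp] lemma realize_tMin {v : γ → FinSub} {t : LWSO.Term γ} :
    (tMin t).realize v = wMin (t.realize v) := by
  rfl

@[simp] lemma realize_tBot {v : γ → FinSub} : (tBot : LWSO.Term γ).realize v = wBot := by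
  rfl

@[simp] lemma realize_tZero {v : γ → FinSub} : (tZero : LWSO.Term γ).realize v = wZero := by
  rfl

/-- Equality of terms, as a formula. -/
def fEq (t₁ t₂ : LWSO.Term γ) : LWSO.Formula γ := Term.equal t₁ t₂
/-- `s ⊆ B`, as a formula. -/
def fMem (s B : LWSO.Term γ) : LWSO.Formula γ := fEq (tI s B) s
/-- `s` is a singleton, as a formula. -/
def fSing (s : LWSO.Term γ) : LWSO.Formula γ := fEq (tMin s) s ⊓ (fEq s tBot).not
/-- for singletons: `s ≤ t`, as a formula. -/
def fLe (s t : LWSO.Term γ) : LWSO.Formula γ := fEq (tMin (tU s t)) s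
/-- for singletons: `s < t`, as a formula. -/
def fLt (s t : LWSO.Term γ) : LWSO.Formula γ := fLe s t ⊓ (fEq s t).not

@[simp] lemma realize_fEq {v : γ → FinSub} {t₁ t₂ : LWSO.Term γ} :
    (fEq t₁ t₂).Realize v ↔ t₁.realize v = t₂.realize v := Formula.realize_equal

lemma realize_fMem {v : γ → FinSub} {s B : LWSO.Term γ} {i : II}
    (hs : s.realize v = sing i) :
    (fMem s B).Realize v ↔ i ∈ (B.realize v).1 := by
  rw [fMem, realize_fEq, realize_tI, Subtype.ext_iff, wI_val, hs, sing_val,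
    Set.inter_eq_left, Set.singleton_subset_iff]

lemma realize_fSing {v : γ → FinSub} {s : LWSO.Term γ} :
    (fSing s).Realize v ↔ ∃ i, s.realize v = sing i := by
  rw [fSing, Formula.realize_inf, Formula.realize_not, realize_fEq, realize_fEq,
    realize_tMin, realize_tBot]
  rw [Subtype.ext_iff, Subtype.ext_iff, wMin_val, wBot_val]
  constructor
  · rintro ⟨h1, h2⟩
    obtain ⟨i, hi⟩ := minSet_eq_self_iff.1 ⟨h1, h2⟩
    exact ⟨i, Subtype.ext hi⟩
  · rintro ⟨i, hi⟩
    rw [Subtype.ext_iff, sing_val] at hi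
    obtain ⟨h1, h2⟩ := minSet_eq_self_iff.2 ⟨i, hi⟩
    exact ⟨h1, h2⟩

lemma realize_fLe {v : γ → FinSub} {s t : LWSO.Term γ} {i j : II}
    (hs : s.realize v = sing i) (ht : t.realize v = sing j) :
    (fLe s t).Realize v ↔ i ≤ j := by
  rw [fLe, realize_fEq, realize_tMin, realize_tU, hs, ht, Subtype.ext_iff, wMin_val, wU_val,
    sing_val, sing_val]
  exact minSet_pair_iff

lemma realize_fLt {v : γ → FinSub} {s t : LWSO.Term γ} {i j : II}
    (hs : s.realize v = sing i) (ht : t.realize v = sing j) :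
    (fLt s t).Realize v ↔ i < j := by
  rw [fLt, Formula.realize_inf, Formula.realize_not, realize_fEq, realize_fLe hs ht, hs, ht,
    lt_iff_le_and_ne]
  exact and_congr_right fun _ => not_congr ⟨fun h => sing_injective h ▸ rfl,
    fun h => by rw [h]⟩

/-- Existential quantification over points (singletons). -/
noncomputable def pEx (φ : LWSO.Formula (γ ⊕ Unit)) : LWSO.Formula γ :=
  Formula.iExs Unit (fSing (Term.var (Sum.inr ())) ⊓ φ)

/-- Universal quantification over points (singletons). -/
noncomputable def pAll (φ : LWSO.Formula (γ ⊕ Unit)) : LWSO.Formula γ :=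
  Formula.iAlls Unit ((fSing (Term.var (Sum.inr ()))).imp φ)

lemma realize_pEx {φ : LWSO.Formula (γ ⊕ Unit)} {v : γ → FinSub} :
    (pEx φ).Realize v ↔ ∃ i : II, φ.Realize (Sum.elim v fun _ => sing i) := by
  rw [pEx, Formula.realize_iExs]
  constructor
  · rintro ⟨w, hw⟩
    rw [Formula.realize_inf] at hw
    obtain ⟨hsing, hφ⟩ := hw
    rw [realize_fSing] at hsing
    obtain ⟨i, hi⟩ := hsing
    simp only [Term.realize_var] at hi
    have hwi : w = fun _ => sing i := funext fun u => by cases u; exact hi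
    refine ⟨i, ?_⟩
    have : (fun a => Sum.elim v w (id a)) = Sum.elim v fun _ => sing i := by
      rw [hwi]; rfl
    rwa [hwi] at hφ
  · rintro ⟨i, hi⟩
    refine ⟨fun _ => sing i, ?_⟩
    rw [Formula.realize_inf]
    constructor
    · rw [realize_fSing]
      exact ⟨i, by simp⟩
    · exact hi

lemma realize_pAll {φ : LWSO.Formula (γ ⊕ Unit)} {v : γ → FinSub} :
    (pAll φ).Realize v ↔ ∀ i : II, φ.Realize (Sum.elim v fun _ => sing i) := by
  rw [pAll, Formula.realize_iAlls]
  constructor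
  · intro h i
    have := h (fun _ => sing i)
    rw [Formula.realize_imp] at this
    exact this (realize_fSing.2 ⟨i, by simp⟩)
  · intro h w
    rw [Formula.realize_imp]
    intro hsing
    rw [realize_fSing] at hsing
    obtain ⟨i, hi⟩ := hsing
    simp only [Term.realize_var] at hi
    have hwi : w = fun _ => sing i := funext fun u => by cases u; exact hi
    have heq : (fun a => Sum.elim v w (id a)) = Sum.elim v fun _ => sing i := by
      rw [hwi]; rfl
    rw [hwi]
    exact h i

end FormulaBuilders


section PointFormulas

open FirstOrder.Language

variable {γ : Type}

lemma sing_eq_wZero_iff {i : II} : sing i = wZero ↔ i = 0 := by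
  rw [Subtype.ext_iff, sing_val, wZero_val, Set.singleton_eq_singleton_iff]

/-- `tp ∈ [tY, tZ]`-membership: the point `tp` belongs to the set with left endpoints `tY` and
right endpoints `tZ`. -/
noncomputable def membF (tY tZ tp : LWSO.Term γ) : LWSO.Formula γ :=
  pEx (fMem (Term.var (Sum.inr ())) (tY.relabel Sum.inl) ⊓
       fLe (Term.var (Sum.inr ())) (tp.relabel Sum.inl) ⊓
    pAll ((fMem (Term.var (Sum.inr ())) (tZ.relabel (Sum.inl ∘ Sum.inl))).imp
      (fLt (Term.var (Sum.inr ())) (Term.var (Sum.inl (Sum.inr ()))) ⊔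
       fLe (tp.relabel (Sum.inl ∘ Sum.inl)) (Term.var (Sum.inr ())))))

lemma realize_membF {v : γ → FinSub} {tY tZ tp : LWSO.Term γ} {i : II}
    (hp : tp.realize v = sing i) :
    (membF tY tZ tp).Realize v ↔ Mb (tY.realize v).1 (tZ.realize v).1 i := by
  rw [membF, realize_pEx, Mb]
  refine exists_congr fun y => ?_
  rw [Formula.realize_inf, Formula.realize_inf, and_assoc]
  have hsy : Term.realize (L := LWSO) (Sum.elim v fun _ => (sing y : FinSub) : γ ⊕ Unit → FinSub) (Term.var (Sum.inr ())) = sing y := by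
    simp
  have hty : Term.realize (L := LWSO) (Sum.elim v fun _ => (sing y : FinSub) : γ ⊕ Unit → FinSub) (tY.relabel Sum.inl) = tY.realize v := by
    rw [Term.realize_relabel]; rfl
  have htp : Term.realize (L := LWSO) (Sum.elim v fun _ => (sing y : FinSub) : γ ⊕ Unit → FinSub) (tp.relabel Sum.inl) = sing i := by
    rw [Term.realize_relabel]; exact hp
  rw [realize_fMem hsy, realize_fLe hsy htp, hty, realize_pAll]
  refine and_congr_right fun _ => and_congr_right fun _ => ?_
  refine forall_congr' fun z => ?_
  set v₂ : (γ ⊕ Unit) ⊕ Unit → FinSub := Sum.elim (Sum.elim v fun _ => sing y) fun _ => sing z with hv₂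
  have hsz : Term.realize (L := LWSO) v₂ (Term.var (Sum.inr ())) = sing z := by simp [hv₂]
  have hsy' : Term.realize (L := LWSO) v₂ (Term.var (Sum.inl (Sum.inr ()))) = sing y := by simp [hv₂]
  have htz : Term.realize (L := LWSO) v₂ (tZ.relabel (Sum.inl ∘ Sum.inl)) = tZ.realize v := by
    rw [Term.realize_relabel]; rfl
  have htp' : Term.realize (L := LWSO) v₂ (tp.relabel (Sum.inl ∘ Sum.inl)) = sing i := by
    rw [Term.realize_relabel]; exact hp
  rw [Formula.realize_imp, realize_fMem hsz, htz, Formula.realize_sup,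
    realize_fLt hsz hsy', realize_fLe htp' hsz]

/-- `tp` is a left endpoint of the set defined by the point formula `φ`. -/
noncomputable def lendF (φ : LWSO.Formula (γ ⊕ Unit)) : LWSO.Formula (γ ⊕ Unit) :=
  φ ⊓ (fEq (Term.var (Sum.inr ())) tZero ⊔
    pEx (fLt (Term.var (Sum.inr ())) (Term.var (Sum.inl (Sum.inr ()))) ⊓
      pAll ((fLt (Term.var (Sum.inl (Sum.inr ()))) (Term.var (Sum.inr ())) ⊓
             fLt (Term.var (Sum.inr ())) (Term.var (Sum.inl (Sum.inl (Sum.inr ()))))).imp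
        ((φ.relabel (Sum.map (Sum.inl ∘ Sum.inl) id)).not))))

/-- `tp` is a right endpoint of the set defined by the point formula `φ`. -/
noncomputable def rendF (φ : LWSO.Formula (γ ⊕ Unit)) : LWSO.Formula (γ ⊕ Unit) :=
  φ ⊓ pEx (fLt (Term.var (Sum.inl (Sum.inr ()))) (Term.var (Sum.inr ())) ⊓
      pAll ((fLt (Term.var (Sum.inl (Sum.inl (Sum.inr ())))) (Term.var (Sum.inr ())) ⊓
             fLt (Term.var (Sum.inr ())) (Term.var (Sum.inl (Sum.inr ())))).imp
        ((φ.relabel (Sum.map (Sum.inl ∘ Sum.inl) id)).not)))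

lemma realize_lendF {φ : LWSO.Formula (γ ⊕ Unit)} {v : γ → FinSub} {m : II → Prop}
    (hφ : ∀ j : II, φ.Realize (Sum.elim v fun _ => sing j) ↔ m j) (i : II) :
    (lendF φ).Realize (Sum.elim v fun _ => sing i) ↔ i ∈ lSet {j | m j} := by
  set v₁ : γ ⊕ Unit → FinSub := Sum.elim v fun _ => sing i with hv₁
  rw [lendF, Formula.realize_inf, Formula.realize_sup, realize_fEq, hφ i, realize_pEx]
  have h0 : Term.realize (L := LWSO) v₁ (Term.var (Sum.inr ())) = sing i := by simp [hv₁]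
  have hz : Term.realize (L := LWSO) v₁ (tZero : LWSO.Term (γ ⊕ Unit)) = wZero := realize_tZero
  rw [h0, hz]
  constructor
  · rintro ⟨hm, h2⟩
    refine ⟨hm, ?_⟩
    rcases h2 with h0' | ⟨i', hbody⟩
    · exact Or.inl (sing_eq_wZero_iff.1 h0')
    rw [Formula.realize_inf] at hbody
    obtain ⟨hlt, hall⟩ := hbody
    set v₂ : (γ ⊕ Unit) ⊕ Unit → FinSub := Sum.elim v₁ fun _ => sing i' with hv₂
    have hsi' : Term.realize (L := LWSO) v₂ (Term.var (Sum.inr ())) = sing i' := by simp [hv₂]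
    have hsi : Term.realize (L := LWSO) v₂ (Term.var (Sum.inl (Sum.inr ()))) = sing i := by simp [hv₂, hv₁]
    rw [realize_fLt hsi' hsi] at hlt
    rw [realize_pAll] at hall
    refine Or.inr ⟨i', hlt, ?_⟩
    rw [Set.eq_empty_iff_forall_notMem]
    rintro q ⟨⟨hq1, hq2⟩, hqm⟩
    have := hall q
    rw [Formula.realize_imp, Formula.realize_inf] at this
    set v₃ : ((γ ⊕ Unit) ⊕ Unit) ⊕ Unit → FinSub := Sum.elim v₂ fun _ => sing q with hv₃
    have hsq : Term.realize (L := LWSO) v₃ (Term.var (Sum.inr ())) = sing q := by simp [hv₃]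
    have hsi'' : Term.realize (L := LWSO) v₃ (Term.var (Sum.inl (Sum.inr ()))) = sing i' := by
      simp [hv₃, hv₂]
    have hsi3 : Term.realize (L := LWSO) v₃ (Term.var (Sum.inl (Sum.inl (Sum.inr ())))) = sing i := by
      simp [hv₃, hv₂, hv₁]
    rw [realize_fLt hsi'' hsq, realize_fLt hsq hsi3, Formula.realize_not,
      Formula.realize_relabel] at this
    have hcomp : v₃ ∘ Sum.map (Sum.inl ∘ Sum.inl) id = Sum.elim v fun _ => sing q :=
      funext fun a => by cases a <;> rfl
    rw [hcomp, hφ q] at this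
    exact this ⟨hq1, hq2⟩ hqm
  · rintro ⟨hm, h2⟩
    refine ⟨hm, ?_⟩
    rcases h2 with h0' | ⟨i', hlt, hgap⟩
    · exact Or.inl (sing_eq_wZero_iff.2 h0')
    refine Or.inr ⟨i', ?_⟩
    rw [Formula.realize_inf]
    set v₂ : (γ ⊕ Unit) ⊕ Unit → FinSub := Sum.elim v₁ fun _ => sing i' with hv₂
    have hsi' : Term.realize (L := LWSO) v₂ (Term.var (Sum.inr ())) = sing i' := by simp [hv₂]
    have hsi : Term.realize (L := LWSO) v₂ (Term.var (Sum.inl (Sum.inr ()))) = sing i := by simp [hv₂, hv₁]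
    rw [realize_fLt hsi' hsi, realize_pAll]
    refine ⟨hlt, fun q => ?_⟩
    rw [Formula.realize_imp, Formula.realize_inf]
    set v₃ : ((γ ⊕ Unit) ⊕ Unit) ⊕ Unit → FinSub := Sum.elim v₂ fun _ => sing q with hv₃
    have hsq : Term.realize (L := LWSO) v₃ (Term.var (Sum.inr ())) = sing q := by simp [hv₃]
    have hsi'' : Term.realize (L := LWSO) v₃ (Term.var (Sum.inl (Sum.inr ()))) = sing i' := by
      simp [hv₃, hv₂]
    have hsi3 : Term.realize (L := LWSO) v₃ (Term.var (Sum.inl (Sum.inl (Sum.inr ())))) = sing i := by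
      simp [hv₃, hv₂, hv₁]
    rw [realize_fLt hsi'' hsq, realize_fLt hsq hsi3, Formula.realize_not,
      Formula.realize_relabel]
    have hcomp : v₃ ∘ Sum.map (Sum.inl ∘ Sum.inl) id = Sum.elim v fun _ => sing q :=
      funext fun a => by cases a <;> rfl
    rw [hcomp, hφ q]
    rintro ⟨hq1, hq2⟩ hqm
    rw [Set.eq_empty_iff_forall_notMem] at hgap
    exact hgap q ⟨⟨hq1, hq2⟩, hqm⟩

lemma realize_rendF {φ : LWSO.Formula (γ ⊕ Unit)} {v : γ → FinSub} {m : II → Prop}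
    (hφ : ∀ j : II, φ.Realize (Sum.elim v fun _ => sing j) ↔ m j) (i : II) :
    (rendF φ).Realize (Sum.elim v fun _ => sing i) ↔ i ∈ rSet {j | m j} := by
  set v₁ : γ ⊕ Unit → FinSub := Sum.elim v fun _ => sing i with hv₁
  rw [rendF, Formula.realize_inf, hφ i, realize_pEx]
  constructor
  · rintro ⟨hm, i'', hbody⟩
    refine ⟨hm, i'', ?_⟩
    rw [Formula.realize_inf] at hbody
    obtain ⟨hlt, hall⟩ := hbody
    set v₂ : (γ ⊕ Unit) ⊕ Unit → FinSub := Sum.elim v₁ fun _ => sing i'' with hv₂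
    have hsi'' : Term.realize (L := LWSO) v₂ (Term.var (Sum.inr ())) = sing i'' := by simp [hv₂]
    have hsi : Term.realize (L := LWSO) v₂ (Term.var (Sum.inl (Sum.inr ()))) = sing i := by simp [hv₂, hv₁]
    rw [realize_fLt hsi hsi''] at hlt
    rw [realize_pAll] at hall
    refine ⟨hlt, ?_⟩
    rw [Set.eq_empty_iff_forall_notMem]
    rintro q ⟨⟨hq1, hq2⟩, hqm⟩
    have := hall q
    rw [Formula.realize_imp, Formula.realize_inf] at this
    set v₃ : ((γ ⊕ Unit) ⊕ Unit) ⊕ Unit → FinSub := Sum.elim v₂ fun _ => sing q with hv₃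
    have hsq : Term.realize (L := LWSO) v₃ (Term.var (Sum.inr ())) = sing q := by simp [hv₃]
    have hsi2 : Term.realize (L := LWSO) v₃ (Term.var (Sum.inl (Sum.inr ()))) = sing i'' := by
      simp [hv₃, hv₂]
    have hsi3 : Term.realize (L := LWSO) v₃ (Term.var (Sum.inl (Sum.inl (Sum.inr ())))) = sing i := by
      simp [hv₃, hv₂, hv₁]
    rw [realize_fLt hsi3 hsq, realize_fLt hsq hsi2, Formula.realize_not,
      Formula.realize_relabel] at this
    have hcomp : v₃ ∘ Sum.map (Sum.inl ∘ Sum.inl) id = Sum.elim v fun _ => sing q :=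
      funext fun a => by cases a <;> rfl
    rw [hcomp, hφ q] at this
    exact this ⟨hq1, hq2⟩ hqm
  · rintro ⟨hm, i'', hlt, hgap⟩
    refine ⟨hm, i'', ?_⟩
    rw [Formula.realize_inf]
    set v₂ : (γ ⊕ Unit) ⊕ Unit → FinSub := Sum.elim v₁ fun _ => sing i'' with hv₂
    have hsi'' : Term.realize (L := LWSO) v₂ (Term.var (Sum.inr ())) = sing i'' := by simp [hv₂]
    have hsi : Term.realize (L := LWSO) v₂ (Term.var (Sum.inl (Sum.inr ()))) = sing i := by simp [hv₂, hv₁]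
    rw [realize_fLt hsi hsi'', realize_pAll]
    refine ⟨hlt, fun q => ?_⟩
    rw [Formula.realize_imp, Formula.realize_inf]
    set v₃ : ((γ ⊕ Unit) ⊕ Unit) ⊕ Unit → FinSub := Sum.elim v₂ fun _ => sing q with hv₃
    have hsq : Term.realize (L := LWSO) v₃ (Term.var (Sum.inr ())) = sing q := by simp [hv₃]
    have hsi2 : Term.realize (L := LWSO) v₃ (Term.var (Sum.inl (Sum.inr ()))) = sing i'' := by
      simp [hv₃, hv₂]
    have hsi3 : Term.realize (L := LWSO) v₃ (Term.var (Sum.inl (Sum.inl (Sum.inr ())))) = sing i := by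
      simp [hv₃, hv₂, hv₁]
    rw [realize_fLt hsi3 hsq, realize_fLt hsq hsi2, Formula.realize_not,
      Formula.realize_relabel]
    have hcomp : v₃ ∘ Sum.map (Sum.inl ∘ Sum.inl) id = Sum.elim v fun _ => sing q :=
      funext fun a => by cases a <;> rfl
    rw [hcomp, hφ q]
    rintro ⟨hq1, hq2⟩ hqm
    rw [Set.eq_empty_iff_forall_notMem] at hgap
    exact hgap q ⟨⟨hq1, hq2⟩, hqm⟩

/-- `v xY` and `v xZ` are exactly the sets of left and right endpoints of the set of points
defined by `φ`. -/
noncomputable def endpointsF (φ : LWSO.Formula (γ ⊕ Unit)) (xY xZ : γ) : LWSO.Formula γ :=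
  pAll (((fMem (Term.var (Sum.inr ())) (Term.var (Sum.inl xY))).iff (lendF φ)) ⊓
        ((fMem (Term.var (Sum.inr ())) (Term.var (Sum.inl xZ))).iff (rendF φ)))

lemma realize_endpointsF {φ : LWSO.Formula (γ ⊕ Unit)} {v : γ → FinSub} {m : II → Prop}
    {xY xZ : γ}
    (hφ : ∀ j : II, φ.Realize (Sum.elim v fun _ => sing j) ↔ m j) :
    (endpointsF φ xY xZ).Realize v ↔
      ((v xY).1 = lSet {j | m j} ∧ (v xZ).1 = rSet {j | m j}) := by
  rw [endpointsF, realize_pAll]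
  rw [Set.ext_iff, Set.ext_iff, ← forall_and]
  refine forall_congr' fun i => ?_
  rw [Formula.realize_inf, Formula.realize_iff, Formula.realize_iff]
  have hsi : Term.realize (L := LWSO) (Sum.elim v fun _ => (sing i : FinSub) : γ ⊕ Unit → FinSub) (Term.var (Sum.inr ())) = sing i := by
    simp
  rw [realize_fMem hsi, realize_fMem hsi, realize_lendF hφ i, realize_rendF hφ i]
  rfl

end PointFormulas


section Graphs

open FirstOrder.Language

/-- The set of left endpoints, as an element of `FinSub`. -/
def Fl (A : FCI) : FinSub := ⟨lSet A.1, A.2.lSet_finite⟩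
/-- The set of right endpoints, as an element of `FinSub`. -/
def Fr (A : FCI) : FinSub := ⟨rSet A.1, A.2.rSet_finite⟩

@[simp] lemma Fl_val (A : FCI) : (Fl A).1 = lSet A.1 := rfl
@[simp] lemma Fr_val (A : FCI) : (Fr A).1 = rSet A.1 := rfl

lemma fci_inj {A B : FCI} (hl : Fl A = Fl B) (hr : Fr A = Fr B) : A = B :=
  fci_ext (congrArg Subtype.val hl) (congrArg Subtype.val hr)

/-- The assignment used for graph formulas: endpoint pairs of the arguments, then the
result pair `(Y, Z)`. -/
def gasg {r : ℕ} (args : Fin r → FCI) (Y Z : FinSub) : (Fin r ⊕ Fin r) ⊕ Bool → FinSub :=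
  Sum.elim (Sum.elim (fun i => Fl (args i)) (fun i => Fr (args i))) (fun b => bif b then Z else Y)

/-- Membership of the point variable in the `i`-th argument. -/
noncomputable def argMembF (r : ℕ) (i : Fin r) :
    LWSO.Formula (((Fin r ⊕ Fin r) ⊕ Bool) ⊕ Unit) :=
  membF (Term.var (Sum.inl (Sum.inl (Sum.inl i)))) (Term.var (Sum.inl (Sum.inl (Sum.inr i))))
    (Term.var (Sum.inr ()))

lemma realize_argMembF {r : ℕ} {i : Fin r} {args : Fin r → FCI} {Y Z : FinSub} (j : II) :
    (argMembF r i).Realize (Sum.elim (gasg args Y Z) fun _ => sing j) ↔ j ∈ (args i).1 := by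
  rw [argMembF, realize_membF (i := j) (by simp)]
  simp only [Term.realize_var]
  exact (mem_iff_Mb (args i).2 j).symm

lemma eq_FlFr_iff {C : FCI} {Y Z : FinSub} :
    (Y.1 = lSet C.1 ∧ Z.1 = rSet C.1) ↔ (Y = Fl C ∧ Z = Fr C) := by
  constructor
  · rintro ⟨h1, h2⟩
    exact ⟨Subtype.ext h1, Subtype.ext h2⟩
  · rintro ⟨rfl, rfl⟩
    exact ⟨rfl, rfl⟩

/-- Graph formula for union. -/
noncomputable def GU : LWSO.Formula ((Fin 2 ⊕ Fin 2) ⊕ Bool) :=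
  endpointsF (argMembF 2 0 ⊔ argMembF 2 1) (Sum.inr false) (Sum.inr true)

lemma realize_GU (args : Fin 2 → FCI) (Y Z : FinSub) :
    GU.Realize (gasg args Y Z) ↔
      (Y = Fl (funMap (L := LL) (M := FCI) LLFunc.union args) ∧ Z = Fr (funMap (L := LL) (M := FCI) LLFunc.union args)) := by
  have hμ : ∀ j : II, ((argMembF 2 0 ⊔ argMembF 2 1).Realize
      (Sum.elim (gasg args Y Z) fun _ => sing j)) ↔
        j ∈ (funMap (L := LL) (M := FCI) LLFunc.union args).1 := by
    intro j
    rw [Formula.realize_sup, realize_argMembF j, realize_argMembF j]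
    exact (Set.mem_union j _ _).symm
  rw [GU, realize_endpointsF hμ, Set.setOf_mem_eq]
  exact eq_FlFr_iff

/-- Graph formula for intersection. -/
noncomputable def GI : LWSO.Formula ((Fin 2 ⊕ Fin 2) ⊕ Bool) :=
  endpointsF (argMembF 2 0 ⊓ argMembF 2 1) (Sum.inr false) (Sum.inr true)

lemma realize_GI (args : Fin 2 → FCI) (Y Z : FinSub) :
    GI.Realize (gasg args Y Z) ↔
      (Y = Fl (funMap (L := LL) (M := FCI) LLFunc.inter args) ∧ Z = Fr (funMap (L := LL) (M := FCI) LLFunc.inter args)) := by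
  have hμ : ∀ j : II, ((argMembF 2 0 ⊓ argMembF 2 1).Realize
      (Sum.elim (gasg args Y Z) fun _ => sing j)) ↔
        j ∈ (funMap (L := LL) (M := FCI) LLFunc.inter args).1 := by
    intro j
    rw [Formula.realize_inf, realize_argMembF j, realize_argMembF j]
    exact (Set.mem_inter_iff j _ _).symm
  rw [GI, realize_endpointsF hμ, Set.setOf_mem_eq]
  exact eq_FlFr_iff

/-- Graph formula for the empty set. -/
noncomputable def GBot : LWSO.Formula ((Fin 0 ⊕ Fin 0) ⊕ Bool) :=
  endpointsF ⊥ (Sum.inr false) (Sum.inr true)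

lemma realize_GBot (args : Fin 0 → FCI) (Y Z : FinSub) :
    GBot.Realize (gasg args Y Z) ↔
      (Y = Fl (funMap (L := LL) (M := FCI) LLFunc.bot args) ∧ Z = Fr (funMap (L := LL) (M := FCI) LLFunc.bot args)) := by
  have hμ : ∀ j : II, ((⊥ : LWSO.Formula (((Fin 0 ⊕ Fin 0) ⊕ Bool) ⊕ Unit)).Realize
      (Sum.elim (gasg args Y Z) fun _ => sing j)) ↔
        j ∈ (funMap (L := LL) (M := FCI) LLFunc.bot args).1 := by
    intro j
    rw [Formula.realize_bot]
    exact (Set.mem_empty_iff_false j).symm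
  rw [GBot, realize_endpointsF hμ, Set.setOf_mem_eq]
  exact eq_FlFr_iff

/-- Graph formula for `{0}`. -/
noncomputable def GZero : LWSO.Formula ((Fin 0 ⊕ Fin 0) ⊕ Bool) :=
  endpointsF (fEq (Term.var (Sum.inr ())) tZero) (Sum.inr false) (Sum.inr true)

lemma realize_GZero (args : Fin 0 → FCI) (Y Z : FinSub) :
    GZero.Realize (gasg args Y Z) ↔
      (Y = Fl (funMap (L := LL) (M := FCI) LLFunc.zero args) ∧ Z = Fr (funMap (L := LL) (M := FCI) LLFunc.zero args)) := by
  have hμ : ∀ j : II, ((fEq (Term.var (Sum.inr ())) tZero :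
      LWSO.Formula (((Fin 0 ⊕ Fin 0) ⊕ Bool) ⊕ Unit)).Realize
      (Sum.elim (gasg args Y Z) fun _ => sing j)) ↔
        j ∈ (funMap (L := LL) (M := FCI) LLFunc.zero args).1 := by
    intro j
    rw [realize_fEq, realize_tZero]
    simp only [Term.realize_var]
    rw [show Sum.elim (gasg args Y Z) (fun _ => sing j) (Sum.inr ()) = sing j from rfl]
    rw [sing_eq_wZero_iff]
    exact (Set.mem_singleton_iff).symm
  rw [GZero, realize_endpointsF hμ, Set.setOf_mem_eq]
  exact eq_FlFr_iff

/-- Graph formula for `min`. -/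
noncomputable def GMin : LWSO.Formula ((Fin 1 ⊕ Fin 1) ⊕ Bool) :=
  endpointsF (argMembF 1 0 ⊓
    pAll ((membF (Term.var (Sum.inl (Sum.inl (Sum.inl (Sum.inl 0)))))
            (Term.var (Sum.inl (Sum.inl (Sum.inl (Sum.inr 0)))))
            (Term.var (Sum.inr ()))).imp
      (fLe (Term.var (Sum.inl (Sum.inr ()))) (Term.var (Sum.inr ())))))
    (Sum.inr false) (Sum.inr true)

/-- Graph formula for `max`. -/
noncomputable def GMax : LWSO.Formula ((Fin 1 ⊕ Fin 1) ⊕ Bool) :=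
  endpointsF (argMembF 1 0 ⊓
    pAll ((membF (Term.var (Sum.inl (Sum.inl (Sum.inl (Sum.inl 0)))))
            (Term.var (Sum.inl (Sum.inl (Sum.inl (Sum.inr 0)))))
            (Term.var (Sum.inr ()))).imp
      (fLe (Term.var (Sum.inr ())) (Term.var (Sum.inl (Sum.inr ()))))))
    (Sum.inr false) (Sum.inr true)

lemma realize_GMin (args : Fin 1 → FCI) (Y Z : FinSub) :
    GMin.Realize (gasg args Y Z) ↔
      (Y = Fl (funMap (L := LL) (M := FCI) LLFunc.min args) ∧ Z = Fr (funMap (L := LL) (M := FCI) LLFunc.min args)) := by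
  have hμ : ∀ j : II, ((argMembF 1 0 ⊓
      pAll ((membF (Term.var (Sum.inl (Sum.inl (Sum.inl (Sum.inl 0)))))
            (Term.var (Sum.inl (Sum.inl (Sum.inl (Sum.inr 0)))))
            (Term.var (Sum.inr ()))).imp
      (fLe (Term.var (Sum.inl (Sum.inr ()))) (Term.var (Sum.inr ()))))).Realize
      (Sum.elim (gasg args Y Z) fun _ => sing j)) ↔
        j ∈ (funMap (L := LL) (M := FCI) LLFunc.min args).1 := by
    intro j
    rw [Formula.realize_inf, realize_argMembF j, realize_pAll]
    have hq : ∀ q : II,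
        ((membF (Term.var (Sum.inl (Sum.inl (Sum.inl (Sum.inl 0)))))
            (Term.var (Sum.inl (Sum.inl (Sum.inl (Sum.inr 0)))))
            (Term.var (Sum.inr ()))).imp
          (fLe (Term.var (Sum.inl (Sum.inr ()))) (Term.var (Sum.inr ())))).Realize
            (Sum.elim (Sum.elim (gasg args Y Z) fun _ => sing j) fun _ => sing q) ↔
          (q ∈ (args 0).1 → j ≤ q) := by
      intro q
      rw [Formula.realize_imp, realize_membF (i := q) (by simp),
        realize_fLe (i := j) (j := q) (by simp) (by simp)]
      simp only [Term.realize_var]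
      rw [show Sum.elim (Sum.elim (gasg args Y Z) fun _ => sing j) (fun _ => sing q)
        (Sum.inl (Sum.inl (Sum.inl (Sum.inl 0)))) = Fl (args 0) from rfl]
      rw [show Sum.elim (Sum.elim (gasg args Y Z) fun _ => sing j) (fun _ => sing q)
        (Sum.inl (Sum.inl (Sum.inl (Sum.inr 0)))) = Fr (args 0) from rfl]
      rw [Fl_val, Fr_val]
      exact imp_congr (mem_iff_Mb (args 0).2 q).symm Iff.rfl
    rw [forall_congr' hq]
    exact Iff.rfl
  rw [GMin, realize_endpointsF hμ, Set.setOf_mem_eq]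
  exact eq_FlFr_iff

lemma realize_GMax (args : Fin 1 → FCI) (Y Z : FinSub) :
    GMax.Realize (gasg args Y Z) ↔
      (Y = Fl (funMap (L := LL) (M := FCI) LLFunc.max args) ∧ Z = Fr (funMap (L := LL) (M := FCI) LLFunc.max args)) := by
  have hμ : ∀ j : II, ((argMembF 1 0 ⊓
      pAll ((membF (Term.var (Sum.inl (Sum.inl (Sum.inl (Sum.inl 0)))))
            (Term.var (Sum.inl (Sum.inl (Sum.inl (Sum.inr 0)))))
            (Term.var (Sum.inr ()))).imp
      (fLe (Term.var (Sum.inr ())) (Term.var (Sum.inl (Sum.inr ())))))).Realize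
      (Sum.elim (gasg args Y Z) fun _ => sing j)) ↔
        j ∈ (funMap (L := LL) (M := FCI) LLFunc.max args).1 := by
    intro j
    rw [Formula.realize_inf, realize_argMembF j, realize_pAll]
    have hq : ∀ q : II,
        ((membF (Term.var (Sum.inl (Sum.inl (Sum.inl (Sum.inl 0)))))
            (Term.var (Sum.inl (Sum.inl (Sum.inl (Sum.inr 0)))))
            (Term.var (Sum.inr ()))).imp
          (fLe (Term.var (Sum.inr ())) (Term.var (Sum.inl (Sum.inr ()))))).Realize
            (Sum.elim (Sum.elim (gasg args Y Z) fun _ => sing j) fun _ => sing q) ↔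
          (q ∈ (args 0).1 → q ≤ j) := by
      intro q
      rw [Formula.realize_imp, realize_membF (i := q) (by simp),
        realize_fLe (i := q) (j := j) (by simp) (by simp)]
      simp only [Term.realize_var]
      rw [show Sum.elim (Sum.elim (gasg args Y Z) fun _ => sing j) (fun _ => sing q)
        (Sum.inl (Sum.inl (Sum.inl (Sum.inl 0)))) = Fl (args 0) from rfl]
      rw [show Sum.elim (Sum.elim (gasg args Y Z) fun _ => sing j) (fun _ => sing q)
        (Sum.inl (Sum.inl (Sum.inl (Sum.inr 0)))) = Fr (args 0) from rfl]
      rw [Fl_val, Fr_val]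
      exact imp_congr (mem_iff_Mb (args 0).2 q).symm Iff.rfl
    rw [forall_congr' hq]
    exact Iff.rfl
  rw [GMax, realize_endpointsF hμ, Set.setOf_mem_eq]
  exact eq_FlFr_iff

/-- Graph formula for `l`. -/
noncomputable def GLeft : LWSO.Formula ((Fin 1 ⊕ Fin 1) ⊕ Bool) :=
  endpointsF (fMem (Term.var (Sum.inr ())) (Term.var (Sum.inl (Sum.inl (Sum.inl 0)))))
    (Sum.inr false) (Sum.inr true)

lemma realize_GLeft (args : Fin 1 → FCI) (Y Z : FinSub) :
    GLeft.Realize (gasg args Y Z) ↔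
      (Y = Fl (funMap (L := LL) (M := FCI) LLFunc.left args) ∧ Z = Fr (funMap (L := LL) (M := FCI) LLFunc.left args)) := by
  have hμ : ∀ j : II, ((fMem (Term.var (Sum.inr ()))
      (Term.var (Sum.inl (Sum.inl (Sum.inl 0)))) :
      LWSO.Formula (((Fin 1 ⊕ Fin 1) ⊕ Bool) ⊕ Unit)).Realize
      (Sum.elim (gasg args Y Z) fun _ => sing j)) ↔
        j ∈ (funMap (L := LL) (M := FCI) LLFunc.left args).1 := by
    intro j
    rw [realize_fMem (i := j) (by simp)]
    simp only [Term.realize_var]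
    exact Iff.rfl
  rw [GLeft, realize_endpointsF hμ, Set.setOf_mem_eq]
  exact eq_FlFr_iff

/-- Graph formula for `r`. -/
noncomputable def GRight : LWSO.Formula ((Fin 1 ⊕ Fin 1) ⊕ Bool) :=
  endpointsF (fMem (Term.var (Sum.inr ())) (Term.var (Sum.inl (Sum.inl (Sum.inr 0)))))
    (Sum.inr false) (Sum.inr true)

lemma realize_GRight (args : Fin 1 → FCI) (Y Z : FinSub) :
    GRight.Realize (gasg args Y Z) ↔
      (Y = Fl (funMap (L := LL) (M := FCI) LLFunc.right args) ∧ Z = Fr (funMap (L := LL) (M := FCI) LLFunc.right args)) := by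
  have hμ : ∀ j : II, ((fMem (Term.var (Sum.inr ()))
      (Term.var (Sum.inl (Sum.inl (Sum.inr 0)))) :
      LWSO.Formula (((Fin 1 ⊕ Fin 1) ⊕ Bool) ⊕ Unit)).Realize
      (Sum.elim (gasg args Y Z) fun _ => sing j)) ↔
        j ∈ (funMap (L := LL) (M := FCI) LLFunc.right args).1 := by
    intro j
    rw [realize_fMem (i := j) (by simp)]
    simp only [Term.realize_var]
    exact Iff.rfl
  rw [GRight, realize_endpointsF hμ, Set.setOf_mem_eq]
  exact eq_FlFr_iff

/-- The domain formula: `(Y, Z)` is the endpoint pair of some element of `P_fci(𝕀)`. -/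
noncomputable def deltaF : LWSO.Formula Bool :=
  endpointsF (membF (Term.var (Sum.inl false)) (Term.var (Sum.inl true))
    (Term.var (Sum.inr ()))) false true

lemma realize_deltaF (Y Z : FinSub) :
    deltaF.Realize (fun b => bif b then Z else Y) ↔ ∃ A : FCI, Fl A = Y ∧ Fr A = Z := by
  have hμ : ∀ j : II, ((membF (Term.var (Sum.inl false)) (Term.var (Sum.inl true))
      (Term.var (Sum.inr ())) : LWSO.Formula (Bool ⊕ Unit)).Realize
      (Sum.elim (fun b => bif b then Z else Y) fun _ => sing j)) ↔ Mb Y.1 Z.1 j := by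
    intro j
    rw [realize_membF (i := j) (by simp)]
    simp only [Term.realize_var]
    exact Iff.rfl
  rw [deltaF, realize_endpointsF hμ]
  constructor
  · rintro ⟨hY, hZ⟩
    exact ⟨⟨{j | Mb Y.1 Z.1 j}, isFCI_Mb Y.2 Z.2⟩, Subtype.ext hY.symm, Subtype.ext hZ.symm⟩
  · rintro ⟨A, rfl, rfl⟩
    have h : {j | Mb (Fl A).1 (Fr A).1 j} = A.1 := (fci_val_eq_Mb A).symm
    rw [h]
    exact ⟨rfl, rfl⟩

end Graphs


section Translation

open FirstOrder.Language

lemma realize_congr {δ : Type} (ψ : LWSO.Formula δ) {v₁ v₂ : δ → FinSub} (h : v₁ = v₂) :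
    ψ.Realize v₁ ↔ ψ.Realize v₂ := by rw [h]

/-- Assignment encoding a valuation `v : β → FCI` by endpoint pairs, together with a result
pair `(Y, Z)`. -/
def tasg {β : Type} (v : β → FCI) (Y Z : FinSub) : (β ⊕ β) ⊕ Bool → FinSub :=
  Sum.elim (Sum.elim (fun x => Fl (v x)) (fun x => Fr (v x))) (fun b => bif b then Z else Y)

/-- Relabelling sending the pair slot of the `i`-th subterm to the `i`-th fresh pair. -/
def rhoArg {β : Type} {r : ℕ} (i : Fin r) :
    (β ⊕ β) ⊕ Bool → ((β ⊕ β) ⊕ Bool) ⊕ (Fin r ⊕ Fin r)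
  | .inl x => .inl (.inl x)
  | .inr b => .inr (bif b then .inr i else .inl i)

/-- Relabelling sending the parameter slots of a graph formula to the fresh pairs
and its result slot to the outer result slot. -/
def rhoG {β : Type} {r : ℕ} :
    (Fin r ⊕ Fin r) ⊕ Bool → ((β ⊕ β) ⊕ Bool) ⊕ (Fin r ⊕ Fin r)
  | .inl yz => .inr yz
  | .inr b => .inl (.inr b)

lemma rhoArg_asg {β : Type} {r : ℕ} (v : β → FCI) (Y Z : FinSub)
    (w : Fin r ⊕ Fin r → FinSub) (i : Fin r) :
    Sum.elim (tasg v Y Z) w ∘ rhoArg i = tasg v (w (Sum.inl i)) (w (Sum.inr i)) := by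
  funext a
  rcases a with x | b
  · rfl
  · cases b <;> rfl

lemma compose_graph {β : Type} {r : ℕ} (G : LWSO.Formula ((Fin r ⊕ Fin r) ⊕ Bool))
    (op : (Fin r → FCI) → FCI)
    (hG : ∀ (args : Fin r → FCI) (Y Z : FinSub),
      G.Realize (gasg args Y Z) ↔ (Y = Fl (op args) ∧ Z = Fr (op args)))
    (t : Fin r → LL.Term β)
    (Γ : Fin r → LWSO.Formula ((β ⊕ β) ⊕ Bool))
    (hΓ : ∀ i (v : β → FCI) (Y Z : FinSub),
      (Γ i).Realize (tasg v Y Z) ↔ (Y = Fl ((t i).realize v) ∧ Z = Fr ((t i).realize v))) :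
    ∃ Γ' : LWSO.Formula ((β ⊕ β) ⊕ Bool),
      ∀ (v : β → FCI) (Y Z : FinSub),
        Γ'.Realize (tasg v Y Z) ↔
          (Y = Fl (op fun i => (t i).realize v) ∧ Z = Fr (op fun i => (t i).realize v)) := by
  classical
  refine ⟨Formula.iExs (Fin r ⊕ Fin r)
    (BoundedFormula.iInf (fun i => (Γ i).relabel (rhoArg i)) ⊓ G.relabel rhoG),
    fun v Y Z => ?_⟩
  rw [Formula.realize_iExs]
  constructor
  · rintro ⟨w, hw⟩
    rw [Formula.realize_inf] at hw
    obtain ⟨h1, h2⟩ := hw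
    have h1' : ∀ i : Fin r, (Y' Z' : FinSub) → w (Sum.inl i) = Y' → w (Sum.inr i) = Z' →
        (Γ i).Realize (tasg v Y' Z') := by
      intro i Y' Z' hY' hZ'
      have hi : Formula.Realize ((Γ i).relabel (rhoArg i))
          (Sum.elim (tasg v Y Z) w) := BoundedFormula.realize_iInf.1 h1 i
      rw [Formula.realize_relabel] at hi
      rw [← hY', ← hZ', ← rhoArg_asg v Y Z w i]
      exact hi
    have hwl : ∀ i, w (Sum.inl i) = Fl ((t i).realize v) := fun i =>
      ((hΓ i v _ _).1 (h1' i _ _ rfl rfl)).1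
    have hwr : ∀ i, w (Sum.inr i) = Fr ((t i).realize v) := fun i =>
      ((hΓ i v _ _).1 (h1' i _ _ rfl rfl)).2
    have hasg : Sum.elim (tasg v Y Z) w ∘ rhoG = gasg (fun i => (t i).realize v) Y Z := by
      funext a
      rcases a with (i | i) | b
      · exact hwl i
      · exact hwr i
      · cases b <;> rfl
    have h2' : Formula.Realize (G.relabel rhoG) (Sum.elim (tasg v Y Z) w) := h2
    rw [Formula.realize_relabel] at h2'
    exact (hG _ Y Z).1 ((realize_congr G hasg).1 h2')
  · rintro ⟨hY, hZ⟩
    refine ⟨Sum.elim (fun i => Fl ((t i).realize v)) (fun i => Fr ((t i).realize v)), ?_⟩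
    rw [Formula.realize_inf]
    constructor
    · refine BoundedFormula.realize_iInf.2 fun i => ?_
      have : Formula.Realize ((Γ i).relabel (rhoArg i))
          (Sum.elim (tasg v Y Z)
            (Sum.elim (fun i => Fl ((t i).realize v)) (fun i => Fr ((t i).realize v)))) := by
        rw [Formula.realize_relabel]
        exact (realize_congr (Γ i) (rhoArg_asg v Y Z _ i)).2
          ((hΓ i v _ _).2 ⟨rfl, rfl⟩)
      exact this
    · have hasg : Sum.elim (tasg v Y Z)
          (Sum.elim (fun i => Fl ((t i).realize v)) (fun i => Fr ((t i).realize v))) ∘ rhoG =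
          gasg (fun i => (t i).realize v) Y Z := by
        funext a
        rcases a with (i | i) | b
        · rfl
        · rfl
        · cases b <;> rfl
      have : Formula.Realize (G.relabel rhoG)
          (Sum.elim (tasg v Y Z)
            (Sum.elim (fun i => Fl ((t i).realize v)) (fun i => Fr ((t i).realize v)))) := by
        rw [Formula.realize_relabel]
        exact (realize_congr G hasg).2 ((hG _ Y Z).2 ⟨hY, hZ⟩)
      exact this

lemma transTerm {β : Type} (t : LL.Term β) :
    ∃ Γ : LWSO.Formula ((β ⊕ β) ⊕ Bool),
      ∀ (v : β → FCI) (Y Z : FinSub),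
        Γ.Realize (tasg v Y Z) ↔ (Y = Fl (t.realize v) ∧ Z = Fr (t.realize v)) := by
  induction t with
  | var x =>
    refine ⟨fEq (Term.var (Sum.inr false)) (Term.var (Sum.inl (Sum.inl x))) ⊓
            fEq (Term.var (Sum.inr true)) (Term.var (Sum.inl (Sum.inr x))), fun v Y Z => ?_⟩
    rw [Formula.realize_inf, realize_fEq, realize_fEq]
    simp only [Term.realize_var]
    exact Iff.rfl
  | func f ts ih =>
    choose Γ hΓ using ih
    cases f with
    | union => exact compose_graph GU _ realize_GU ts Γ hΓ
    | inter => exact compose_graph GI _ realize_GI ts Γ hΓ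
    | bot => exact compose_graph GBot _ realize_GBot ts Γ hΓ
    | zero => exact compose_graph GZero _ realize_GZero ts Γ hΓ
    | min => exact compose_graph GMin _ realize_GMin ts Γ hΓ
    | max => exact compose_graph GMax _ realize_GMax ts Γ hΓ
    | left => exact compose_graph GLeft _ realize_GLeft ts Γ hΓ
    | right => exact compose_graph GRight _ realize_GRight ts Γ hΓ

/-- Assignment encoding a valuation and a bound-variable valuation by endpoint pairs. -/
def fasg {α : Type} {m : ℕ} (v : α → FCI) (xs : Fin m → FCI) :
    (α ⊕ α) ⊕ (Fin m ⊕ Fin m) → FinSub :=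
  Sum.elim (Sum.elim (fun a => Fl (v a)) (fun a => Fr (v a)))
    (Sum.elim (fun i => Fl (xs i)) (fun i => Fr (xs i)))

/-- Relabelling for the `equal` case. -/
def rhoE {α : Type} {m : ℕ} : ((α ⊕ Fin m) ⊕ (α ⊕ Fin m)) ⊕ Bool →
    ((α ⊕ α) ⊕ (Fin m ⊕ Fin m)) ⊕ Bool
  | .inl (.inl (.inl a)) => .inl (.inl (.inl a))
  | .inl (.inl (.inr i)) => .inl (.inr (.inl i))
  | .inl (.inr (.inl a)) => .inl (.inl (.inr a))
  | .inl (.inr (.inr i)) => .inl (.inr (.inr i))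
  | .inr b => .inr b

lemma rhoE_asg {α : Type} {m : ℕ} (v : α → FCI) (xs : Fin m → FCI) (w : Bool → FinSub) :
    Sum.elim (fasg v xs) w ∘ rhoE = tasg (Sum.elim v xs) (w false) (w true) := by
  funext a
  rcases a with ((a | i) | (a | i)) | b
  · rfl
  · rfl
  · rfl
  · rfl
  · cases b <;> rfl

/-- Relabelling for the `all` case. -/
def rhoA {α : Type} {m : ℕ} : (α ⊕ α) ⊕ (Fin (m + 1) ⊕ Fin (m + 1)) →
    ((α ⊕ α) ⊕ (Fin m ⊕ Fin m)) ⊕ Bool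
  | .inl (.inl a) => .inl (.inl (.inl a))
  | .inl (.inr a) => .inl (.inl (.inr a))
  | .inr (.inl i) => Fin.lastCases (.inr false) (fun j => .inl (.inr (.inl j))) i
  | .inr (.inr i) => Fin.lastCases (.inr true) (fun j => .inl (.inr (.inr j))) i

lemma rhoA_asg {α : Type} {m : ℕ} (v : α → FCI) (xs : Fin m → FCI) (A : FCI)
    (w : Bool → FinSub) (h0 : w false = Fl A) (h1 : w true = Fr A) :
    Sum.elim (fasg v xs) w ∘ rhoA = fasg v (Fin.snoc xs A) := by
  funext a
  rcases a with (a | a) | (i | i)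
  · rfl
  · rfl
  · induction i using Fin.lastCases with
    | last => simp only [Function.comp_apply, rhoA, Sum.elim_inr, Sum.elim_inl,
        Fin.lastCases_last, fasg, Fin.snoc_last, h0]
    | cast j => simp only [Function.comp_apply, rhoA, Sum.elim_inr, Sum.elim_inl,
        Fin.lastCases_castSucc, fasg, Fin.snoc_castSucc]
  · induction i using Fin.lastCases with
    | last => simp only [Function.comp_apply, rhoA, Sum.elim_inr, Sum.elim_inl,
        Fin.lastCases_last, fasg, Fin.snoc_last, h1]
    | cast j => simp only [Function.comp_apply, rhoA, Sum.elim_inr, Sum.elim_inl,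
        Fin.lastCases_castSucc, fasg, Fin.snoc_castSucc]

lemma transBF {α : Type} {m : ℕ} (φ : LL.BoundedFormula α m) :
    ∃ ψ : LWSO.Formula ((α ⊕ α) ⊕ (Fin m ⊕ Fin m)),
      ∀ (v : α → FCI) (xs : Fin m → FCI),
        φ.Realize v xs ↔ ψ.Realize (fasg v xs) := by
  induction φ with
  | @falsum k => exact ⟨⊥, fun v xs => Iff.rfl⟩
  | @equal k t₁ t₂ =>
    obtain ⟨Γ₁, h₁⟩ := transTerm t₁
    obtain ⟨Γ₂, h₂⟩ := transTerm t₂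
    refine ⟨Formula.iExs Bool
      (Γ₁.relabel rhoE ⊓ Γ₂.relabel rhoE), fun v xs => ?_⟩
    rw [Formula.realize_iExs]
    rw [show (BoundedFormula.equal t₁ t₂).Realize v xs ↔
      t₁.realize (Sum.elim v xs) = t₂.realize (Sum.elim v xs) from Iff.rfl]
    constructor
    · intro h
      refine ⟨fun b => bif b then Fr (t₁.realize (Sum.elim v xs))
        else Fl (t₁.realize (Sum.elim v xs)), ?_⟩
      rw [Formula.realize_inf]
      constructor
      · have := (h₁ (Sum.elim v xs) (Fl (t₁.realize (Sum.elim v xs)))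
          (Fr (t₁.realize (Sum.elim v xs)))).2 ⟨rfl, rfl⟩
        have h' : Formula.Realize (Γ₁.relabel rhoE)
            (Sum.elim (fasg v xs) (fun b => bif b then Fr (t₁.realize (Sum.elim v xs))
              else Fl (t₁.realize (Sum.elim v xs)))) := by
          rw [Formula.realize_relabel]
          exact (realize_congr Γ₁ (rhoE_asg v xs _)).2 this
        exact h'
      · have := (h₂ (Sum.elim v xs) (Fl (t₁.realize (Sum.elim v xs)))
          (Fr (t₁.realize (Sum.elim v xs)))).2 ⟨by rw [h], by rw [h]⟩
        have h' : Formula.Realize (Γ₂.relabel rhoE)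
            (Sum.elim (fasg v xs) (fun b => bif b then Fr (t₁.realize (Sum.elim v xs))
              else Fl (t₁.realize (Sum.elim v xs)))) := by
          rw [Formula.realize_relabel]
          exact (realize_congr Γ₂ (rhoE_asg v xs _)).2 this
        exact h'
    · rintro ⟨w, hw⟩
      rw [Formula.realize_inf] at hw
      obtain ⟨hw₁, hw₂⟩ := hw
      have hw₁' : Formula.Realize (Γ₁.relabel rhoE) (Sum.elim (fasg v xs) w) := hw₁
      have hw₂' : Formula.Realize (Γ₂.relabel rhoE) (Sum.elim (fasg v xs) w) := hw₂
      rw [Formula.realize_relabel] at hw₁' hw₂'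
      have e₁ := (h₁ (Sum.elim v xs) (w false) (w true)).1
        ((realize_congr Γ₁ (rhoE_asg v xs w)).1 hw₁')
      have e₂ := (h₂ (Sum.elim v xs) (w false) (w true)).1
        ((realize_congr Γ₂ (rhoE_asg v xs w)).1 hw₂')
      exact fci_inj (e₁.1.symm.trans e₂.1) (e₁.2.symm.trans e₂.2)
  | @rel k l R ts => exact Empty.elim R
  | @imp k φ₁ φ₂ ih₁ ih₂ =>
    obtain ⟨ψ₁, hψ₁⟩ := ih₁
    obtain ⟨ψ₂, hψ₂⟩ := ih₂
    exact ⟨ψ₁.imp ψ₂, fun v xs => by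
      rw [BoundedFormula.realize_imp, Formula.realize_imp, hψ₁ v xs, hψ₂ v xs]⟩
  | @all k φ' ih =>
    obtain ⟨ψ', h'⟩ := ih
    refine ⟨Formula.iAlls Bool
      ((deltaF.relabel Sum.inr).imp (ψ'.relabel rhoA)), fun v xs => ?_⟩
    rw [BoundedFormula.realize_all, Formula.realize_iAlls]
    constructor
    · intro h w
      rw [Formula.realize_imp]
      intro hδ
      have hδ' : Formula.Realize (deltaF.relabel Sum.inr) (Sum.elim (fasg v xs) w) := hδ
      rw [Formula.realize_relabel] at hδ'
      have hδ'' : deltaF.Realize (fun b => bif b then (w true) else (w false)) := by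
        refine (realize_congr deltaF ?_).1 hδ'
        funext b
        cases b <;> rfl
      obtain ⟨A, hA1, hA2⟩ := (realize_deltaF (w false) (w true)).1 hδ''
      have hres : Formula.Realize (ψ'.relabel rhoA) (Sum.elim (fasg v xs) w) := by
        rw [Formula.realize_relabel]
        exact (realize_congr ψ' (rhoA_asg v xs A w hA1.symm hA2.symm)).2
          ((h' v (Fin.snoc xs A)).1 (h A))
      exact hres
    · intro h A
      have hd := h (fun b => bif b then Fr A else Fl A)
      rw [Formula.realize_imp] at hd
      have hδ : Formula.Realize (deltaF.relabel Sum.inr)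
          (Sum.elim (fasg v xs) (fun b => bif b then Fr A else Fl A)) := by
        rw [Formula.realize_relabel]
        have : (Sum.elim (fasg v xs) (fun b => bif b then Fr A else Fl A)) ∘ Sum.inr =
            (fun b => bif b then Fr A else Fl A) := rfl
        rw [this]
        exact (realize_deltaF (Fl A) (Fr A)).2 ⟨A, rfl, rfl⟩
      have hres := hd hδ
      have hres' : Formula.Realize (ψ'.relabel rhoA)
          (Sum.elim (fasg v xs) (fun b => bif b then Fr A else Fl A)) := hres
      rw [Formula.realize_relabel] at hres'
      exact (h' v (Fin.snoc xs A)).2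
        ((realize_congr ψ' (rhoA_asg v xs A _ rfl rfl)).1 hres')

end Translation

universe u v

/-- For every `L_L`-formula `φ(X₁,…,Xₙ)` there is an `L_WSO`-formula
`ψ(Y₁, Z₁, …, Yₙ, Zₙ)` such that for every tuple `(A₁,…,Aₙ)` of elements of `P_fci(𝕀)`:
`L(𝕀) ⊨ φ(A₁,…,Aₙ)` iff `WSO(𝕀) ⊨ ψ(l(A₁), r(A₁), …, l(Aₙ), r(Aₙ))`. -/
theorem L_interpreted_in_WSO (n : ℕ) (φ : LL.Formula (Fin n)) :
    ∃ ψ : LWSO.Formula (Fin n ⊕ Fin n),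
      ∀ (A : Fin n → FCI)
        (hl : ∀ i, (lSet (A i).1).Finite) (hr : ∀ i, (rSet (A i).1).Finite),
        (φ.Realize A ↔
          ψ.Realize (Sum.elim (fun i => (⟨lSet (A i).1, hl i⟩ : FinSub))
            (fun i => (⟨rSet (A i).1, hr i⟩ : FinSub)))) := by
  obtain ⟨ψ₀, h₀⟩ := transBF φ
  refine ⟨ψ₀.relabel (Sum.elim id (Sum.elim Fin.elim0 Fin.elim0)), fun A hl hr => ?_⟩
  rw [Formula.realize_relabel]
  have hasg : (Sum.elim (fun i => (⟨lSet (A i).1, hl i⟩ : FinSub))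
      (fun i => (⟨rSet (A i).1, hr i⟩ : FinSub))) ∘
      (Sum.elim id (Sum.elim Fin.elim0 Fin.elim0)) = fasg A default := by
    funext a
    rcases a with (i | i) | (i | i)
    · rfl
    · rfl
    · exact i.elim0
    · exact i.elim0
  rw [hasg]
  exact h₀ A default

end MCpaper
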